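/- arXiv:2307.13151 — 4 statements merged into one kernel-verified Lean document; each statement's English description precedes it below -/
import Mathlib

section
/- For every θ ∈ Θ with |θ| < r₀ and every z ∈ Z, one has a_θ[ℳ_θ z] ≥ ν_⋆ |θ|² ‖z‖₀², where ν_⋆ = γ(1 − K_Z)/(3 K²). -/
noncomputable section

open scoped Classical

/-- An abstract family of non-negative bounded sesquilinear forms `a θ`, `b θ`
(linear in the first argument, conjugate-linear in the second) on a complex Hilbert
space `H`, parametrised by `θ` in a compact subset `Θ` of `ℝⁿ`, such that
`(·,·)_θ := a θ + b θ` is a family of inner products whose norms are equivalent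
to the norm of `H`. -/
structure FormFamily (n : ℕ) (H : Type*) [NormedAddCommGroup H] [InnerProductSpace ℂ H]
    [CompleteSpace H] where
  Θ : Set (EuclideanSpace ℝ (Fin n))
  compactΘ : IsCompact Θ
  a : EuclideanSpace ℝ (Fin n) → H → H → ℂ
  b : EuclideanSpace ℝ (Fin n) → H → H → ℂ
  a_addL : ∀ θ ∈ Θ, ∀ u v w : H, a θ (u + v) w = a θ u w + a θ v w
  a_smulL : ∀ θ ∈ Θ, ∀ (c : ℂ) (u w : H), a θ (c • u) w = c * a θ u w
  a_addR : ∀ θ ∈ Θ, ∀ u v w : H, a θ u (v + w) = a θ u v + a θ u w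
  a_smulR : ∀ θ ∈ Θ, ∀ (c : ℂ) (u w : H), a θ u (c • w) = starRingEnd ℂ c * a θ u w
  a_nonneg : ∀ θ ∈ Θ, ∀ u : H, 0 ≤ (a θ u u).re
  a_im : ∀ θ ∈ Θ, ∀ u : H, (a θ u u).im = 0
  a_bdd : ∀ θ ∈ Θ, ∃ C : ℝ, ∀ u w : H, ‖a θ u w‖ ≤ C * ‖u‖ * ‖w‖
  b_addL : ∀ θ ∈ Θ, ∀ u v w : H, b θ (u + v) w = b θ u w + b θ v w
  b_smulL : ∀ θ ∈ Θ, ∀ (c : ℂ) (u w : H), b θ (c • u) w = c * b θ u w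
  b_addR : ∀ θ ∈ Θ, ∀ u v w : H, b θ u (v + w) = b θ u v + b θ u w
  b_smulR : ∀ θ ∈ Θ, ∀ (c : ℂ) (u w : H), b θ u (c • w) = starRingEnd ℂ c * b θ u w
  b_nonneg : ∀ θ ∈ Θ, ∀ u : H, 0 ≤ (b θ u u).re
  b_im : ∀ θ ∈ Θ, ∀ u : H, (b θ u u).im = 0
  b_bdd : ∀ θ ∈ Θ, ∃ C : ℝ, ∀ u w : H, ‖b θ u w‖ ≤ C * ‖u‖ * ‖w‖
  equivNorm : ∀ θ ∈ Θ, ∃ c₁ c₂ : ℝ, 0 < c₁ ∧ ∀ u : H,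
    c₁ * ‖u‖ ^ 2 ≤ (a θ u u).re + (b θ u u).re ∧
      (a θ u u).re + (b θ u u).re ≤ c₂ * ‖u‖ ^ 2

namespace FormFamily

variable {n : ℕ} {H : Type*} [NormedAddCommGroup H] [InnerProductSpace ℂ H] [CompleteSpace H]

/-- The inner product `(u, w)_θ := a θ u w + b θ u w`. -/
def ip (S : FormFamily n H) (θ : EuclideanSpace ℝ (Fin n)) (u w : H) : ℂ :=
  S.a θ u w + S.b θ u w

/-- The squared `θ`-norm `‖u‖_θ ^ 2 = (u, u)_θ`. -/
def nsq (S : FormFamily n H) (θ : EuclideanSpace ℝ (Fin n)) (u : H) : ℝ :=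
  (S.ip θ u u).re

/-- The `θ`-norm `‖u‖_θ`. -/
def nrm (S : FormFamily n H) (θ : EuclideanSpace ℝ (Fin n)) (u : H) : ℝ :=
  Real.sqrt (S.nsq θ u)

/-- The degeneracy subspace `V_θ = {v : a_θ[v] = 0}`. -/
def V (S : FormFamily n H) (θ : EuclideanSpace ℝ (Fin n)) : Set H :=
  {v : H | S.a θ v v = 0}

/-- `W_θ`, the orthogonal complement of `V_θ` in `H` with respect to `(·,·)_θ`. -/
def W (S : FormFamily n H) (θ : EuclideanSpace ℝ (Fin n)) : Set H :=
  {w : H | ∀ v ∈ S.V θ, S.ip θ w v = 0}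

end FormFamily

/-- `f : H → ℂ` is a bounded conjugate-linear functional. -/
def IsBddConjLinear {H : Type*} [NormedAddCommGroup H] [InnerProductSpace ℂ H]
    (f : H → ℂ) : Prop :=
  (∀ u v : H, f (u + v) = f u + f v) ∧
    (∀ (c : ℂ) (u : H), f (c • u) = starRingEnd ℂ c * f u) ∧
    ∃ C : ℝ, ∀ u : H, ‖f u‖ ≤ C * ‖u‖

/-- The homogenised form `a^h_θ(v,vt) = a''₀(v,vt)θ·θ - a₀(N_θ v, N_θ vt)`. -/
def ahom {n : ℕ} {H : Type*} [NormedAddCommGroup H] [InnerProductSpace ℂ H] [CompleteSpace H]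
    (S : FormFamily n H) (a'' : H → H → Fin n → Fin n → ℂ)
    (N : EuclideanSpace ℝ (Fin n) → H → H) (θ : EuclideanSpace ℝ (Fin n)) (v vt : H) : ℂ :=
  (∑ j, ∑ k, a'' v vt j k * (θ j : ℂ) * (θ k : ℂ)) - S.a 0 (N θ v) (N θ vt)


/-- A sesquilinear form with real non-negative diagonal. -/
structure SForm (H : Type*) [AddCommGroup H] [Module ℂ H] where
  f : H → H → ℂ
  addL : ∀ u v w : H, f (u + v) w = f u w + f v w
  smulL : ∀ (c : ℂ) (u w : H), f (c • u) w = c * f u w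
  addR : ∀ u v w : H, f u (v + w) = f u v + f u w
  smulR : ∀ (c : ℂ) (u w : H), f u (c • w) = (starRingEnd ℂ) c * f u w
  im0 : ∀ u : H, (f u u).im = 0
  nonneg : ∀ u : H, 0 ≤ (f u u).re

namespace SForm

variable {H : Type*} [AddCommGroup H] [Module ℂ H] (B : SForm H)

lemma zeroL (w : H) : B.f 0 w = 0 := by
  have := B.smulL 0 0 w; simpa using this

lemma zeroR (u : H) : B.f u 0 = 0 := by
  have := B.smulR 0 u 0; simpa using this

lemma negL (u w : H) : B.f (-u) w = - B.f u w := by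
  have := B.smulL (-1) u w; simpa using this

lemma negR (u w : H) : B.f u (-w) = - B.f u w := by
  have := B.smulR (-1) u w; simpa using this

lemma subL (u v w : H) : B.f (u - v) w = B.f u w - B.f v w := by
  rw [sub_eq_add_neg, B.addL, B.negL, sub_eq_add_neg]

lemma subR (u v w : H) : B.f u (v - w) = B.f u v - B.f u w := by
  rw [sub_eq_add_neg, B.addR, B.negR, sub_eq_add_neg]

lemma herm (u w : H) : B.f w u = (starRingEnd ℂ) (B.f u w) := by
  have j1 : B.f u (Complex.I • w) = -Complex.I * B.f u w := by
    rw [B.smulR, Complex.conj_I]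
  have j2 : B.f (Complex.I • w) u = Complex.I * B.f w u := B.smulL _ _ _
  have j3 : B.f (Complex.I • w) (Complex.I • w) = B.f w w := by
    rw [B.smulL, B.smulR, Complex.conj_I]
    linear_combination (-(B.f w w)) * Complex.I_sq
  have e1 : B.f (u + w) (u + w) = B.f u u + B.f u w + B.f w u + B.f w w := by
    rw [B.addL, B.addR, B.addR]; ring
  have e2 : B.f (u + Complex.I • w) (u + Complex.I • w)
      = B.f u u + (-Complex.I) * B.f u w + Complex.I * B.f w u + B.f w w := by
    rw [B.addL, B.addR, B.addR, j1, j2, j3]; ring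
  have i1 := B.im0 (u + w)
  have i2 := B.im0 (u + Complex.I • w)
  rw [e1] at i1
  rw [e2] at i2
  have hu := B.im0 u
  have hw := B.im0 w
  simp only [Complex.add_im, Complex.mul_im, Complex.neg_re, Complex.neg_im,
    Complex.I_re, Complex.I_im] at i1 i2
  apply Complex.ext <;>
    simp only [Complex.conj_re, Complex.conj_im] <;> nlinarith [hu, hw]

lemma herm_re (u w : H) : (B.f w u).re = (B.f u w).re := by
  rw [B.herm u w, Complex.conj_re]

lemma expand_add (u w : H) :
    (B.f (u + w) (u + w)).re = (B.f u u).re + 2 * (B.f u w).re + (B.f w w).re := by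
  have e1 : B.f (u + w) (u + w) = B.f u u + B.f u w + B.f w u + B.f w w := by
    rw [B.addL, B.addR, B.addR]; ring
  rw [e1]
  simp only [Complex.add_re]
  rw [B.herm_re w u]
  ring

lemma expand_sub (u w : H) :
    (B.f (u - w) (u - w)).re = (B.f u u).re - 2 * (B.f u w).re + (B.f w w).re := by
  have e1 : B.f (u - w) (u - w) = B.f u u - B.f u w - B.f w u + B.f w w := by
    rw [B.subL, B.subR, B.subR]; ring
  rw [e1]
  simp only [Complex.add_re, Complex.sub_re]
  rw [B.herm_re w u]
  ring

/-- Cauchy–Schwarz for a non-negative sesquilinear form. -/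
lemma cs (u w : H) : ‖B.f u w‖ ^ 2 ≤ (B.f u u).re * (B.f w w).re := by
  by_cases h0 : B.f u w = 0
  · simp [h0]
    exact mul_nonneg (B.nonneg u) (B.nonneg w)
  · set m : ℝ := ‖B.f u w‖ with hm
    have hm0 : 0 < m := norm_pos_iff.2 h0
    have hmne : (m : ℂ) ≠ 0 := by exact_mod_cast hm0.ne'
    set c : ℂ := B.f u w / (m : ℂ) with hc
    have hconjmul : (starRingEnd ℂ) (B.f u w) * B.f u w = ((m : ℂ)) ^ 2 := by
      rw [Complex.conj_mul']
    have hfc : (starRingEnd ℂ) c * B.f u w = (m : ℂ) := by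
      rw [hc, map_div₀, Complex.conj_ofReal, div_mul_eq_mul_div, hconjmul, sq,
        mul_div_assoc, div_self hmne, mul_one]
    have hcc : c * (starRingEnd ℂ) c = 1 := by
      rw [hc, map_div₀, Complex.conj_ofReal, div_mul_div_comm,
        mul_comm (B.f u w) _, hconjmul, sq, div_self (mul_ne_zero hmne hmne)]
    have h4 : c * (starRingEnd ℂ) (B.f u w) = (m : ℂ) := by
      have := congrArg (starRingEnd ℂ) hfc
      simpa [map_mul, Complex.conj_ofReal, mul_comm] using this
    have key : ∀ t : ℝ, 0 ≤ (B.f w w).re * (t * t) + (2 * m) * t + (B.f u u).re := by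
      intro t
      have hnn := B.nonneg (u + (t : ℂ) • c • w)
      have hexp : B.f (u + (t : ℂ) • c • w) (u + (t : ℂ) • c • w)
          = B.f u u + ((2 * t * m : ℝ) : ℂ) + ((t ^ 2 : ℝ) : ℂ) * B.f w w := by
        simp only [B.addL, B.addR, B.smulL, B.smulR, Complex.conj_ofReal, B.herm u w]
        push_cast
        linear_combination (t : ℂ) * hfc + (t : ℂ) * h4 + (t : ℂ) ^ 2 * B.f w w * hcc
      rw [hexp] at hnn
      simp only [Complex.add_re, Complex.re_ofReal_mul, Complex.ofReal_re] at hnn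
      nlinarith [hnn]
    have hd := discrim_le_zero key
    rw [discrim] at hd
    nlinarith [hd]

lemma left_zero {u : H} (h : B.f u u = 0) (w : H) : B.f u w = 0 := by
  have hcs := B.cs u w
  rw [h] at hcs
  simp only [Complex.zero_re, zero_mul] at hcs
  have : ‖B.f u w‖ = 0 := by nlinarith [norm_nonneg (B.f u w)]
  exact norm_eq_zero.1 this

lemma right_zero {u : H} (h : B.f u u = 0) (w : H) : B.f w u = 0 := by
  rw [B.herm u w, B.left_zero h w, map_zero]

end SForm

/-- Type synonym to carry an alternative inner-product structure. -/
structure PSyn (H : Type*) where val : H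

namespace PSyn

variable {H : Type*} [AddCommGroup H] [Module ℂ H]

instance : Add (PSyn H) := ⟨fun x y => ⟨x.val + y.val⟩⟩
instance : Zero (PSyn H) := ⟨⟨0⟩⟩
instance : Neg (PSyn H) := ⟨fun x => ⟨-x.val⟩⟩
instance : Sub (PSyn H) := ⟨fun x y => ⟨x.val - y.val⟩⟩
instance : SMul ℕ (PSyn H) := ⟨fun n x => ⟨n • x.val⟩⟩
instance : SMul ℤ (PSyn H) := ⟨fun n x => ⟨n • x.val⟩⟩
instance : SMul ℂ (PSyn H) := ⟨fun c x => ⟨c • x.val⟩⟩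

lemma val_injective : Function.Injective (val (H := H)) := fun a b h => by
  cases a; cases b; cases h; rfl

instance : AddCommGroup (PSyn H) :=
  val_injective.addCommGroup val (by rfl) (fun _ _ => by rfl) (fun _ => by rfl)
    (fun _ _ => by rfl) (fun _ _ => by rfl) (fun _ _ => by rfl)

instance : Module ℂ (PSyn H) :=
  val_injective.module ℂ { toFun := val, map_zero' := by rfl, map_add' := by intro a b; rfl }
    (by intro c x; rfl)

@[simp] lemma val_add (x y : PSyn H) : (x + y).val = x.val + y.val := rfl
@[simp] lemma val_sub (x y : PSyn H) : (x - y).val = x.val - y.val := rfl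
@[simp] lemma val_zero : (0 : PSyn H).val = 0 := rfl
@[simp] lemma val_smul (c : ℂ) (x : PSyn H) : (c • x).val = c • x.val := rfl

/-- `val` as a linear map. -/
def valₗ : PSyn H →ₗ[ℂ] H :=
  { toFun := val, map_add' := by intro a b; rfl, map_smul' := by intro c x; rfl }

end PSyn

/-- Orthogonal decomposition with respect to an equivalent inner product given by a
sesquilinear form `B`. -/
theorem exists_decomp {H : Type*} [NormedAddCommGroup H] [InnerProductSpace ℂ H]
    [CompleteSpace H] (B : SForm H) (c₁ c₂ : ℝ) (hc₁ : 0 < c₁) (hc₂ : 0 ≤ c₂)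
    (lower : ∀ u : H, c₁ * ‖u‖ ^ 2 ≤ (B.f u u).re)
    (upper : ∀ u : H, (B.f u u).re ≤ c₂ * ‖u‖ ^ 2)
    (V : Submodule ℂ H) (hV : IsClosed (V : Set H)) (u : H) :
    ∃ v ∈ V, ∀ v' ∈ V, B.f (u - v) v' = 0 := by
  classical
  letI cd : InnerProductSpace.Core ℂ (PSyn H) :=
    { inner := fun x y => B.f y.val x.val
      conj_inner_symm := fun x y => by
        exact (B.herm x.val y.val).symm
      re_inner_nonneg := fun x => B.nonneg x.val
      definite := fun x hx => by
        have hx' : B.f x.val x.val = 0 := hx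
        have h1 := lower x.val
        rw [hx'] at h1
        simp only [Complex.zero_re] at h1
        have h2 : ‖x.val‖ ^ 2 ≤ 0 := (mul_le_mul_iff_right₀ hc₁).1 (by simpa using h1)
        have h4 : ‖x.val‖ ^ 2 = 0 := le_antisymm h2 (sq_nonneg _)
        have h5 : ‖x.val‖ = 0 := pow_eq_zero_iff (n := 2) (by norm_num) |>.1 h4
        exact PSyn.val_injective (norm_eq_zero.1 h5)
      add_left := fun x y z => by
        have h : B.f z.val ((x + y).val) = B.f z.val x.val + B.f z.val y.val := by
          rw [PSyn.val_add, B.addR]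
        exact h
      smul_left := fun x y r => by
        have h : B.f y.val ((r • x).val) = (starRingEnd ℂ) r * B.f y.val x.val := by
          rw [PSyn.val_smul, B.smulR]
        exact h }
  letI : NormedAddCommGroup (PSyn H) := cd.toNormedAddCommGroup
  letI : InnerProductSpace ℂ (PSyn H) := InnerProductSpace.ofCore cd.toCore
  have hnorm : ∀ x : PSyn H, ‖x‖ = Real.sqrt ((B.f x.val x.val).re) := fun x => rfl
  -- val is Lipschitz and antilipschitz
  have hlip : LipschitzWith (Real.toNNReal (Real.sqrt (1 / c₁))) (PSyn.val (H := H)) := by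
    apply LipschitzWith.of_dist_le_mul
    intro x y
    have h1 : dist x y = ‖x - y‖ := dist_eq_norm x y
    have h2 : dist x.val y.val = ‖x.val - y.val‖ := dist_eq_norm _ _
    rw [h1, h2, hnorm]
    have h3 := lower (x - y).val
    have h4 : ‖(x - y).val‖ = ‖x.val - y.val‖ := by rw [PSyn.val_sub]
    rw [h4] at h3
    have h5 : ‖x.val - y.val‖ ^ 2 ≤ (1 / c₁) * (B.f (x - y).val (x - y).val).re := by
      rw [div_mul_eq_mul_div, le_div_iff₀ hc₁]
      nlinarith [h3]
    have h6 : 0 ≤ (B.f (x - y).val (x - y).val).re := B.nonneg _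
    calc ‖x.val - y.val‖ = Real.sqrt (‖x.val - y.val‖ ^ 2) := by
          rw [Real.sqrt_sq (norm_nonneg _)]
    _ ≤ Real.sqrt ((1 / c₁) * (B.f (x - y).val (x - y).val).re) := Real.sqrt_le_sqrt h5
    _ = Real.sqrt (1 / c₁) * Real.sqrt ((B.f (x - y).val (x - y).val).re) := by
          rw [Real.sqrt_mul (by positivity)]
    _ = (Real.toNNReal (Real.sqrt (1 / c₁)) : ℝ) * Real.sqrt ((B.f (x - y).val (x - y).val).re) := by
          rw [Real.coe_toNNReal _ (Real.sqrt_nonneg _)]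
  have hanti : AntilipschitzWith (Real.toNNReal (Real.sqrt c₂)) (PSyn.val (H := H)) := by
    apply AntilipschitzWith.of_le_mul_dist
    intro x y
    have h1 : dist x y = ‖x - y‖ := dist_eq_norm x y
    have h2 : dist x.val y.val = ‖x.val - y.val‖ := dist_eq_norm _ _
    rw [h1, h2, hnorm]
    have h3 := upper (x - y).val
    calc Real.sqrt ((B.f (x - y).val (x - y).val).re)
        ≤ Real.sqrt (c₂ * ‖(x - y).val‖ ^ 2) := Real.sqrt_le_sqrt h3
    _ = Real.sqrt c₂ * ‖(x - y).val‖ := by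
          rw [Real.sqrt_mul hc₂, Real.sqrt_sq (norm_nonneg _)]
    _ = (Real.toNNReal (Real.sqrt c₂) : ℝ) * ‖x.val - y.val‖ := by
          rw [Real.coe_toNNReal _ (Real.sqrt_nonneg _), PSyn.val_sub]
  have hsurj : Function.Surjective (PSyn.val (H := H)) := fun x => ⟨⟨x⟩, rfl⟩
  haveI : CompleteSpace (PSyn H) :=
    ((hanti.isUniformInducing hlip.uniformContinuous).completeSpace_congr hsurj).2
      (by infer_instance)
  set V' : Submodule ℂ (PSyn H) := V.comap PSyn.valₗ with hV'
  have hV'closed : IsClosed (V' : Set (PSyn H)) := by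
    have : (V' : Set (PSyn H)) = PSyn.val ⁻¹' (V : Set H) := rfl
    rw [this]
    exact hV.preimage hlip.continuous
  haveI : CompleteSpace V' := hV'closed.completeSpace_coe
  obtain ⟨y, hy, zz, hzz, huyz⟩ := V'.exists_add_mem_mem_orthogonal (⟨u⟩ : PSyn H)
  refine ⟨y.val, hy, ?_⟩
  intro v' hv'
  have hz' : (⟨u⟩ : PSyn H) - y = zz := by rw [huyz]; abel
  have hmem : (⟨v'⟩ : PSyn H) ∈ V' := hv'
  have := (Submodule.mem_orthogonal V' zz).1 hzz ⟨v'⟩ hmem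
  -- this : ⟪⟨v'⟩, zz⟫ = 0, i.e. B.f zz.val v' = 0
  have hzval : zz.val = u - y.val := by rw [← hz']; rfl
  rw [← hzval]
  exact this

namespace FormFamily

variable {n : ℕ} {H : Type*} [NormedAddCommGroup H] [InnerProductSpace ℂ H] [CompleteSpace H]

/-- `S.a θ` as an `SForm`. -/
def aS (S : FormFamily n H) (θ : EuclideanSpace ℝ (Fin n)) (hθ : θ ∈ S.Θ) : SForm H :=
  ⟨S.a θ, S.a_addL θ hθ, S.a_smulL θ hθ, S.a_addR θ hθ, S.a_smulR θ hθ, S.a_im θ hθ,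
    S.a_nonneg θ hθ⟩

@[simp] lemma aS_f (S : FormFamily n H) (θ) (hθ : θ ∈ S.Θ) : (S.aS θ hθ).f = S.a θ := rfl

/-- `S.ip θ` as an `SForm`. -/
def ipS (S : FormFamily n H) (θ : EuclideanSpace ℝ (Fin n)) (hθ : θ ∈ S.Θ) : SForm H where
  f := S.ip θ
  addL := fun u v w => by
    simp only [FormFamily.ip, S.a_addL θ hθ, S.b_addL θ hθ]; ring
  smulL := fun c u w => by
    simp only [FormFamily.ip, S.a_smulL θ hθ, S.b_smulL θ hθ]; ring
  addR := fun u v w => by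
    simp only [FormFamily.ip, S.a_addR θ hθ, S.b_addR θ hθ]; ring
  smulR := fun c u w => by
    simp only [FormFamily.ip, S.a_smulR θ hθ, S.b_smulR θ hθ]; ring
  im0 := fun u => by
    simp only [FormFamily.ip, Complex.add_im, S.a_im θ hθ u, S.b_im θ hθ u, add_zero]
  nonneg := fun u => by
    simp only [FormFamily.ip, Complex.add_re]
    exact add_nonneg (S.a_nonneg θ hθ u) (S.b_nonneg θ hθ u)

@[simp] lemma ipS_f (S : FormFamily n H) (θ) (hθ : θ ∈ S.Θ) : (S.ipS θ hθ).f = S.ip θ := rfl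

lemma nsq_eq (S : FormFamily n H) (θ) (u : H) : S.nsq θ u = (S.ip θ u u).re := rfl

lemma nsq_nonneg (S : FormFamily n H) {θ} (hθ : θ ∈ S.Θ) (u : H) : 0 ≤ S.nsq θ u :=
  (S.ipS θ hθ).nonneg u

lemma nrm_nonneg (S : FormFamily n H) (θ) (u : H) : 0 ≤ S.nrm θ u := Real.sqrt_nonneg _

lemma nrm_sq (S : FormFamily n H) {θ} (hθ : θ ∈ S.Θ) (u : H) :
    S.nrm θ u ^ 2 = S.nsq θ u := Real.sq_sqrt (S.nsq_nonneg hθ u)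

lemma nrm_le_nrm (S : FormFamily n H) {θ} (u v : H) (h : S.nsq θ u ≤ S.nsq θ v) :
    S.nrm θ u ≤ S.nrm θ v := Real.sqrt_le_sqrt h

lemma ip_norm_le (S : FormFamily n H) {θ} (hθ : θ ∈ S.Θ) (u w : H) :
    ‖S.ip θ u w‖ ≤ S.nrm θ u * S.nrm θ w := by
  have h1 := (S.ipS θ hθ).cs u w
  rw [ipS_f] at h1
  have h2 : S.nrm θ u * S.nrm θ w = Real.sqrt (S.nsq θ u * S.nsq θ w) := by
    rw [Real.sqrt_mul (S.nsq_nonneg hθ u)]; rfl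
  rw [h2]
  calc ‖S.ip θ u w‖ = Real.sqrt (‖S.ip θ u w‖ ^ 2) := (Real.sqrt_sq (norm_nonneg _)).symm
  _ ≤ Real.sqrt (S.nsq θ u * S.nsq θ w) := Real.sqrt_le_sqrt h1

lemma nrm_add_le (S : FormFamily n H) {θ} (hθ : θ ∈ S.Θ) (u w : H) :
    S.nrm θ (u + w) ≤ S.nrm θ u + S.nrm θ w := by
  have hexp := (S.ipS θ hθ).expand_add u w
  rw [ipS_f] at hexp
  have hre : (S.ip θ u w).re ≤ S.nrm θ u * S.nrm θ w := by
    calc (S.ip θ u w).re ≤ |(S.ip θ u w).re| := le_abs_self _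
    _ ≤ ‖S.ip θ u w‖ := by
        exact Complex.abs_re_le_norm _
    _ ≤ S.nrm θ u * S.nrm θ w := S.ip_norm_le hθ u w
  have h1 : S.nsq θ (u + w) ≤ (S.nrm θ u + S.nrm θ w) ^ 2 := by
    have e1 : S.nsq θ (u + w) = (S.ip θ (u+w) (u+w)).re := rfl
    have e2 : (S.ip θ u u).re = S.nsq θ u := rfl
    have e3 : (S.ip θ w w).re = S.nsq θ w := rfl
    have f2 := S.nrm_sq hθ u
    have f3 := S.nrm_sq hθ w
    rw [e1, hexp]
    nlinarith [hre, e2, e3, f2, f3]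
  calc S.nrm θ (u + w) = Real.sqrt (S.nsq θ (u + w)) := rfl
  _ ≤ Real.sqrt ((S.nrm θ u + S.nrm θ w) ^ 2) := Real.sqrt_le_sqrt h1
  _ = S.nrm θ u + S.nrm θ w :=
      Real.sqrt_sq (add_nonneg (S.nrm_nonneg θ u) (S.nrm_nonneg θ w))

/-- The degeneracy space as a submodule. -/
def Vsub (S : FormFamily n H) (θ) (hθ : θ ∈ S.Θ) : Submodule ℂ H where
  carrier := S.V θ
  zero_mem' := by
    show S.a θ 0 0 = 0
    exact (S.aS θ hθ).zeroL 0
  add_mem' := by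
    intro x y hx hy
    have hx' : (S.aS θ hθ).f x x = 0 := hx
    have hy' : (S.aS θ hθ).f y y = 0 := hy
    show (S.aS θ hθ).f (x + y) (x + y) = 0
    rw [(S.aS θ hθ).addL, (S.aS θ hθ).addR, (S.aS θ hθ).addR, hx', hy',
      (S.aS θ hθ).left_zero hx' y, (S.aS θ hθ).right_zero hx' y]
    simp
  smul_mem' := by
    intro c x hx
    have hx' : S.a θ x x = 0 := hx
    show S.a θ (c • x) (c • x) = 0
    rw [S.a_smulL θ hθ, S.a_smulR θ hθ, hx']
    ring

@[simp] lemma mem_Vsub (S : FormFamily n H) (θ) (hθ : θ ∈ S.Θ) (x : H) :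
    x ∈ S.Vsub θ hθ ↔ S.a θ x x = 0 := Iff.rfl

lemma isClosed_V (S : FormFamily n H) (θ) (hθ : θ ∈ S.Θ) : IsClosed (S.V θ) := by
  obtain ⟨Ca, hCa⟩ := S.a_bdd θ hθ
  have hg : Continuous fun x : H => S.a θ x x := by
    rw [continuous_iff_continuousAt]
    intro v
    rw [ContinuousAt, tendsto_iff_norm_sub_tendsto_zero]
    have hb : ∀ x : H, ‖S.a θ x x - S.a θ v v‖ ≤ Ca * (‖x‖ + ‖v‖) * ‖x - v‖ := by
      intro x
      have e : S.a θ x x - S.a θ v v = S.a θ x (x - v) + S.a θ (x - v) v := by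
        have e1 : (S.aS θ hθ).f x (x - v) = (S.aS θ hθ).f x x - (S.aS θ hθ).f x v :=
          (S.aS θ hθ).subR x x v
        have e2 : (S.aS θ hθ).f (x - v) v = (S.aS θ hθ).f x v - (S.aS θ hθ).f v v :=
          (S.aS θ hθ).subL x v v
        simp only [aS_f] at e1 e2
        rw [e1, e2]
        ring
      rw [e]
      calc ‖S.a θ x (x - v) + S.a θ (x - v) v‖
          ≤ ‖S.a θ x (x - v)‖ + ‖S.a θ (x - v) v‖ := norm_add_le _ _
      _ ≤ Ca * ‖x‖ * ‖x - v‖ + Ca * ‖x - v‖ * ‖v‖ := add_le_add (hCa x (x - v)) (hCa (x - v) v)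
      _ = Ca * (‖x‖ + ‖v‖) * ‖x - v‖ := by ring
    apply squeeze_zero (fun t => norm_nonneg _) hb
    have hcont : Continuous fun x : H => Ca * (‖x‖ + ‖v‖) * ‖x - v‖ := by
      apply Continuous.mul
      · exact continuous_const.mul (continuous_norm.add continuous_const)
      · exact (continuous_id.sub continuous_const).norm
    have := hcont.tendsto v
    simpa using this
  have he : S.V θ = (fun x : H => S.a θ x x) ⁻¹' {0} := rfl
  rw [he]
  exact isClosed_singleton.preimage hg

end FormFamily

/-- Key real-number estimate. -/
lemma alg_key (s2 D M Y zn : ℝ) (hs0 : 0 < s2) (hs1 : s2 ≤ 1) (hD : 0 ≤ D) (hM : 0 ≤ M)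
    (hY : 0 ≤ Y) (hzn : 0 ≤ zn) (hM2 : s2 * (zn ^ 2 + Y ^ 2) ≤ M ^ 2)
    (hMD : M ≤ D + s2 / 2 * Y) : s2 / 3 * zn ^ 2 ≤ D ^ 2 := by
  set s := Real.sqrt s2 with hsdef
  set Q := Real.sqrt (zn ^ 2 + Y ^ 2) with hQdef
  have hs : s ^ 2 = s2 := Real.sq_sqrt hs0.le
  have hsnn : 0 ≤ s := Real.sqrt_nonneg _
  have hsle1 : s ≤ 1 := by
    rw [show (1 : ℝ) = Real.sqrt 1 by simp [Real.sqrt_one]]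
    exact Real.sqrt_le_sqrt hs1
  have hQ : Q ^ 2 = zn ^ 2 + Y ^ 2 := Real.sq_sqrt (by positivity)
  have hQnn : 0 ≤ Q := Real.sqrt_nonneg _
  have hQY : Y ≤ Q := by
    rw [show Y = Real.sqrt (Y ^ 2) from (Real.sqrt_sq hY).symm]
    exact Real.sqrt_le_sqrt (by nlinarith [sq_nonneg zn])
  have hsQ : s * Q ≤ M := by
    have h1 : (s * Q) ^ 2 ≤ M ^ 2 := by rw [mul_pow, hs, hQ]; exact hM2
    calc s * Q = Real.sqrt ((s * Q) ^ 2) := (Real.sqrt_sq (by positivity)).symm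
    _ ≤ Real.sqrt (M ^ 2) := Real.sqrt_le_sqrt h1
    _ = M := Real.sqrt_sq hM
  have hX0 : 0 ≤ 2 / 3 * zn ^ 2 + 5 / 4 * Y ^ 2 := by positivity
  have hQY0 : 0 ≤ Q * Y := mul_nonneg hQnn hY
  have hQ2 : Q ^ 2 * Y ^ 2 = zn ^ 2 * Y ^ 2 + Y ^ 4 := by rw [hQ]; ring
  have hsq : (Q * Y) ^ 2 ≤ (2 / 3 * zn ^ 2 + 5 / 4 * Y ^ 2) ^ 2 := by
    nlinarith [hQ2, sq_nonneg (zn ^ 2), sq_nonneg (Y ^ 2), sq_nonneg (zn * Y)]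
  have hkey : Q * Y ≤ 2 / 3 * zn ^ 2 + 5 / 4 * Y ^ 2 := by
    calc Q * Y = Real.sqrt ((Q * Y) ^ 2) := (Real.sqrt_sq hQY0).symm
    _ ≤ Real.sqrt ((2 / 3 * zn ^ 2 + 5 / 4 * Y ^ 2) ^ 2) := Real.sqrt_le_sqrt hsq
    _ = 2 / 3 * zn ^ 2 + 5 / 4 * Y ^ 2 := Real.sqrt_sq hX0
  have h5 : s2 * Y ≤ s * Y := by
    have e : s2 = s * s := by rw [← hs]; ring
    rw [e]
    exact mul_le_mul_of_nonneg_right (mul_le_of_le_one_left hsnn hsle1) hY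
  have hD1 : s * (Q - Y / 2) ≤ D := by nlinarith [hMD, hsQ, h5]
  have hD2 : 0 ≤ s * (Q - Y / 2) := mul_nonneg hsnn (by linarith)
  have h6 : (s * (Q - Y / 2)) ^ 2 ≤ D ^ 2 := pow_le_pow_left₀ hD2 hD1 2
  have hsub : zn ^ 2 / 3 ≤ (Q - Y / 2) ^ 2 := by nlinarith [hkey, hQ]
  have h7 : s2 / 3 * zn ^ 2 ≤ (s * (Q - Y / 2)) ^ 2 := by
    have e : (s * (Q - Y / 2)) ^ 2 = s2 * (Q - Y / 2) ^ 2 := by rw [mul_pow, hs]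
    have h8 : s2 * (zn ^ 2 / 3) ≤ s2 * (Q - Y / 2) ^ 2 :=
      mul_le_mul_of_nonneg_left hsub hs0.le
    rw [e]
    linarith
  linarith


theorem statement8
    {n : ℕ} (hn : 0 < n) {H : Type*} [NormedAddCommGroup H] [InnerProductSpace ℂ H]
    [CompleteSpace H] (S : FormFamily n H)
    (K : ℝ) (hK0 : 0 < K)
    (hK : ∀ θ₁ ∈ S.Θ, ∀ θ₂ ∈ S.Θ, ∀ u : H, S.nrm θ₁ u ≤ K * S.nrm θ₂ u)
    (La : ℝ) (hLa0 : 0 < La)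
    (hLa : ∀ θ₁ ∈ S.Θ, ∀ θ₂ ∈ S.Θ, ∀ u w : H,
      ‖S.a θ₁ u w - S.a θ₂ u w‖ ≤ La * ‖θ₁ - θ₂‖ * S.nrm θ₁ u * S.nrm θ₁ w)
    (hH1 : ∀ θ ∈ S.Θ, ∃ νθ : ℝ, 0 < νθ ∧ ∀ w ∈ S.W θ, νθ * S.nsq θ w ≤ (S.a θ w w).re)
    (h0 : (0 : EuclideanSpace ℝ (Fin n)) ∈ S.Θ)
    (ν₀ : ℝ) (hν₀ : 0 < ν₀)
    (hgap0 : ∀ w ∈ S.W 0, ν₀ * S.nsq 0 w ≤ (S.a 0 w w).re)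
    (Ncal : EuclideanSpace ℝ (Fin n) → H → H)
    (hNcal : ∀ θ ∈ S.Θ, ‖θ‖ ≤ ν₀ / (2 * La) → ∀ v ∈ S.V 0,
      Ncal θ v ∈ S.W 0 ∧ ∀ w ∈ S.W 0, S.a θ (Ncal θ v) w = - S.a θ v w)
    (Vstar : Submodule ℂ H) (hVstarClosed : IsClosed (Vstar : Set H))
    (Vs : EuclideanSpace ℝ (Fin n) → Set H)
    (hVs0 : Vs 0 = (Vstar : Set H))
    (hVsne : ∀ θ ∈ S.Θ, θ ≠ (0 : EuclideanSpace ℝ (Fin n)) → Vs θ = S.V θ)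
    (h0acc : (0 : EuclideanSpace ℝ (Fin n)) ∈ closure (S.Θ \ {0}))
    (Lstar : ℝ) (hLstar0 : 0 ≤ Lstar)
    (hH2 : ∀ θ₁ ∈ S.Θ, ∀ θ₂ ∈ S.Θ, ∀ v₁ ∈ Vs θ₁,
      sInf ((fun v₂ => S.nrm θ₂ (v₁ - v₂)) '' Vs θ₂) ≤ Lstar * ‖θ₁ - θ₂‖ * S.nrm θ₁ v₁)
    (Z : Submodule ℂ H) (hZclosed : IsClosed (Z : Set H))
    (hZsub : (Z : Set H) ⊆ S.V 0) (hVstarsub : (Vstar : Set H) ⊆ S.V 0)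
    (KZ : ℝ) (hKZ0 : 0 ≤ KZ) (hKZ1 : KZ < 1)
    (hspan : ∀ v₀ ∈ S.V 0, ∃ v ∈ Vstar, ∃ z ∈ Z, v₀ = v + z)
    (htrans : ∀ v ∈ Vstar, ∀ z ∈ Z, ‖S.ip 0 v z‖ ≤ KZ * S.nrm 0 v * S.nrm 0 z)
    (γ : ℝ) (hγ : 0 < γ)
    (hH3 : ∀ θ ∈ S.Θ, ∀ w ∈ S.W θ, γ * ‖θ‖ ^ 2 * S.nsq θ w ≤ (S.a θ w w).re)
    (r₀ : ℝ) (hr₀ : r₀ = if Lstar = 0 then ν₀ / (2 * La)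
      else min (ν₀ / (2 * La)) ((1 - KZ) / (3 * K * Lstar)))
 :
    ∀ θ ∈ S.Θ, ‖θ‖ < r₀ → ∀ z ∈ Z,
      γ * (1 - KZ) / (3 * K ^ 2) * ‖θ‖ ^ 2 * S.nsq 0 z ≤
        (S.a θ (z + Ncal θ z) (z + Ncal θ z)).re := by
  intro θ hθ hθr z hzZ
  classical
  by_cases hθ0 : θ = 0
  · subst hθ0
    have h1 : ‖(0 : EuclideanSpace ℝ (Fin n))‖ = 0 := norm_zero
    rw [h1]
    have h2 := S.a_nonneg 0 h0 (z + Ncal 0 z)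
    have h3 : γ * (1 - KZ) / (3 * K ^ 2) * 0 ^ 2 * S.nsq 0 z = 0 := by ring
    rw [h3]
    exact h2
  -- main case
  have hKZlt : 0 < 1 - KZ := by linarith
  have hr0le : r₀ ≤ ν₀ / (2 * La) := by
    rw [hr₀]; split_ifs with h
    · exact le_refl _
    · exact min_le_left _ _
  have hθsmall : ‖θ‖ ≤ ν₀ / (2 * La) := le_trans hθr.le hr0le
  have hzV0 : z ∈ S.V 0 := hZsub hzZ
  obtain ⟨hNW, hNeq⟩ := hNcal θ hθ hθsmall z hzV0
  set N := Ncal θ z with hNdef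
  set u := z + N with hudef
  set zn := S.nrm 0 z with hzndef
  set Nn := S.nrm 0 N with hNndef
  have hzn0 : 0 ≤ zn := S.nrm_nonneg 0 z
  have hNn0 : 0 ≤ Nn := S.nrm_nonneg 0 N
  have haz : S.a 0 z z = 0 := hzV0
  -- Step F1 : ‖N‖₀ ≤ ‖z‖₀
  have ha0zN : S.a 0 z N = 0 := (S.aS 0 h0).left_zero haz N
  have hLa1 := hLa 0 h0 θ hθ z N
  rw [ha0zN, zero_sub, norm_neg, zero_sub, norm_neg] at hLa1
  have hLa2 := hLa 0 h0 θ hθ N N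
  rw [zero_sub, norm_neg] at hLa2
  have hre1 : (S.a 0 N N).re - (S.a θ N N).re ≤ La * ‖θ‖ * Nn * Nn := by
    calc (S.a 0 N N).re - (S.a θ N N).re = (S.a 0 N N - S.a θ N N).re := by
          rw [Complex.sub_re]
    _ ≤ ‖S.a 0 N N - S.a θ N N‖ := by
          exact Complex.re_le_norm _
    _ ≤ La * ‖θ‖ * Nn * Nn := hLa2
  have hgapN := hgap0 N hNW
  have haθNN : S.a θ N N = - S.a θ z N := hNeq N hNW
  have hre2 : (S.a θ N N).re ≤ La * ‖θ‖ * zn * Nn := by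
    calc (S.a θ N N).re ≤ ‖S.a θ N N‖ := by
          exact Complex.re_le_norm _
    _ = ‖S.a θ z N‖ := by rw [haθNN, norm_neg]
    _ ≤ La * ‖θ‖ * zn * Nn := hLa1
  have hnsqN : S.nsq 0 N = Nn ^ 2 := (S.nrm_sq h0 N).symm
  have hLaθ : La * ‖θ‖ ≤ ν₀ / 2 := by
    have h1 := mul_le_mul_of_nonneg_left hθsmall (le_of_lt hLa0)
    have h2 : La * (ν₀ / (2 * La)) = ν₀ / 2 := by field_simp
    linarith only [h1, h2]
  have hNle : Nn ≤ zn := by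
    have k1 : ν₀ * Nn ^ 2 ≤ ν₀ / 2 * (zn * Nn) + ν₀ / 2 * Nn ^ 2 := by
      have p1 : La * ‖θ‖ * (zn * Nn) ≤ ν₀ / 2 * (zn * Nn) :=
        mul_le_mul_of_nonneg_right hLaθ (mul_nonneg hzn0 hNn0)
      have p2 : La * ‖θ‖ * Nn ^ 2 ≤ ν₀ / 2 * Nn ^ 2 :=
        mul_le_mul_of_nonneg_right hLaθ (sq_nonneg Nn)
      rw [hnsqN] at hgapN
      linarith only [hgapN, hre1, hre2, p1, p2]
    have k2 : ν₀ / 2 * Nn ^ 2 ≤ ν₀ / 2 * (zn * Nn) := by linarith only [k1]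
    have k3 : Nn ^ 2 ≤ zn * Nn := (mul_le_mul_iff_right₀ (half_pos hν₀)).1 k2
    have k4 : Nn ^ 2 ≤ zn ^ 2 := by linarith only [k3, sq_nonneg (Nn - zn)]
    calc Nn = Real.sqrt (Nn ^ 2) := (Real.sqrt_sq hNn0).symm
    _ ≤ Real.sqrt (zn ^ 2) := Real.sqrt_le_sqrt k4
    _ = zn := Real.sqrt_sq hzn0
  -- Step F2 : nsq 0 u = nsq 0 z + nsq 0 N
  have hipNz : S.ip 0 N z = 0 := hNW z hzV0
  have hipzN : S.ip 0 z N = 0 := by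
    have h1 := (S.ipS 0 h0).herm N z
    rw [FormFamily.ipS_f] at h1
    rw [h1, hipNz, map_zero]
  have hnsqU : S.nsq 0 u = S.nsq 0 z + S.nsq 0 N := by
    have h1 := (S.ipS 0 h0).expand_add z N
    rw [FormFamily.ipS_f] at h1
    have e1 : S.nsq 0 u = (S.ip 0 (z + N) (z + N)).re := rfl
    rw [e1, h1, hipzN]
    simp [FormFamily.nsq_eq]
  -- Step F3 : orthogonal decomposition w.r.t. ip θ
  obtain ⟨c₁, c₂, hc₁, hb⟩ := S.equivNorm θ hθ
  have lower : ∀ x : H, c₁ * ‖x‖ ^ 2 ≤ ((S.ipS θ hθ).f x x).re := by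
    intro x
    rw [FormFamily.ipS_f]
    show c₁ * ‖x‖ ^ 2 ≤ (S.a θ x x + S.b θ x x).re
    rw [Complex.add_re]
    exact (hb x).1
  have upper : ∀ x : H, ((S.ipS θ hθ).f x x).re ≤ max c₂ 0 * ‖x‖ ^ 2 := by
    intro x
    rw [FormFamily.ipS_f]
    have h1 : (S.a θ x x + S.b θ x x).re ≤ c₂ * ‖x‖ ^ 2 := by
      rw [Complex.add_re]; exact (hb x).2
    exact le_trans h1 (mul_le_mul_of_nonneg_right (le_max_left _ _) (sq_nonneg _))
  obtain ⟨v, hvV, hworth⟩ := exists_decomp (S.ipS θ hθ) c₁ (max c₂ 0) hc₁ (le_max_right _ _)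
    lower upper (S.Vsub θ hθ) (S.isClosed_V θ hθ) u
  set w := u - v with hwdef
  have hworth' : ∀ v' ∈ S.V θ, S.ip θ w v' = 0 := by
    intro v' hv'
    have := hworth v' hv'
    rw [FormFamily.ipS_f] at this
    exact this
  have hwW : w ∈ S.W θ := hworth'
  have hvVθ : v ∈ S.V θ := hvV
  have hvv : S.a θ v v = 0 := hvVθ
  -- Step F4 : a_θ[u] = a_θ[w]
  have hauu : (S.a θ u u).re = (S.a θ w w).re := by
    have h1 : u = v + w := by rw [hwdef]; abel
    have h2 := (S.aS θ hθ).expand_add v w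
    rw [FormFamily.aS_f] at h2
    have h3 : S.a θ v w = 0 := (S.aS θ hθ).left_zero hvv w
    calc (S.a θ u u).re = (S.a θ (v + w) (v + w)).re := by rw [← h1]
    _ = (S.a θ v v).re + 2 * (S.a θ v w).re + (S.a θ w w).re := h2
    _ = (S.a θ w w).re := by rw [hvv, h3]; simp
  -- Step F5
  have hH3w := hH3 θ hθ w hwW
  -- Step F6 : nsq 0 w ≤ K² nsq θ w
  have hKw := hK 0 h0 θ hθ w
  have hnsqw : S.nsq 0 w ≤ K ^ 2 * S.nsq θ w := by
    have h1 : S.nrm 0 w ^ 2 ≤ (K * S.nrm θ w) ^ 2 :=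
      pow_le_pow_left₀ (S.nrm_nonneg 0 w) hKw 2
    rw [S.nrm_sq h0, mul_pow, S.nrm_sq hθ] at h1
    exact h1
  -- Step F7/F8 : second decomposition w.r.t. ip 0 onto Vstar
  obtain ⟨d₁, d₂, hd₁, hdb⟩ := S.equivNorm 0 h0
  have lower0 : ∀ x : H, d₁ * ‖x‖ ^ 2 ≤ ((S.ipS 0 h0).f x x).re := by
    intro x
    rw [FormFamily.ipS_f]
    show d₁ * ‖x‖ ^ 2 ≤ (S.a 0 x x + S.b 0 x x).re
    rw [Complex.add_re]
    exact (hdb x).1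
  have upper0 : ∀ x : H, ((S.ipS 0 h0).f x x).re ≤ max d₂ 0 * ‖x‖ ^ 2 := by
    intro x
    rw [FormFamily.ipS_f]
    have h1 : (S.a 0 x x + S.b 0 x x).re ≤ d₂ * ‖x‖ ^ 2 := by
      rw [Complex.add_re]; exact (hdb x).2
    exact le_trans h1 (mul_le_mul_of_nonneg_right (le_max_left _ _) (sq_nonneg _))
  obtain ⟨vs, hvs, hrorth⟩ := exists_decomp (S.ipS 0 h0) d₁ (max d₂ 0) hd₁ (le_max_right _ _)
    lower0 upper0 Vstar hVstarClosed v
  set r := v - vs with hrdef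
  have hrorth' : ∀ v₂ ∈ Vstar, S.ip 0 r v₂ = 0 := by
    intro v₂ hv₂
    have := hrorth v₂ hv₂
    rw [FormFamily.ipS_f] at this
    exact this
  set Y := S.nrm 0 vs with hYdef
  set Rr := S.nrm 0 r with hRrdef
  have hY0 : 0 ≤ Y := S.nrm_nonneg 0 vs
  have hRr0 : 0 ≤ Rr := S.nrm_nonneg 0 r
  -- Rr ≤ Lstar * ‖θ‖ * nrm θ v
  have hRle : Rr ≤ Lstar * ‖θ‖ * S.nrm θ v := by
    have hlb : ∀ b ∈ (fun v₂ => S.nrm 0 (v - v₂)) '' Vs 0, Rr ≤ b := by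
      rintro b ⟨v₂, hv₂, rfl⟩
      rw [hVs0] at hv₂
      have hsplit : v - v₂ = r + (vs - v₂) := by rw [hrdef]; abel
      have horth : S.ip 0 r (vs - v₂) = 0 := hrorth' (vs - v₂) (Vstar.sub_mem hvs hv₂)
      apply S.nrm_le_nrm
      have h1 := (S.ipS 0 h0).expand_add r (vs - v₂)
      rw [FormFamily.ipS_f] at h1
      have e1 : S.nsq 0 (v - v₂) = (S.ip 0 (r + (vs - v₂)) (r + (vs - v₂))).re := by
        rw [← hsplit]; rfl
      rw [e1, h1, horth]
      have hnn2 := S.nsq_nonneg h0 (vs - v₂)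
      simp only [Complex.zero_re]
      have e2 : (S.ip 0 r r).re = S.nsq 0 r := rfl
      have e3 : (S.ip 0 (vs - v₂) (vs - v₂)).re = S.nsq 0 (vs - v₂) := rfl
      rw [e2, e3]
      linarith only [hnn2]
    have hne : ((fun v₂ => S.nrm 0 (v - v₂)) '' Vs 0).Nonempty :=
      ⟨_, Set.mem_image_of_mem _ (by rw [hVs0]; exact Vstar.zero_mem)⟩
    have h1 := le_csInf hne hlb
    have hvVs : v ∈ Vs θ := by rw [hVsne θ hθ hθ0]; exact hvVθ
    have h2 := hH2 θ hθ 0 h0 v hvVs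
    rw [sub_zero] at h2
    exact h1.trans h2
  -- t bound
  have htb : Lstar * ‖θ‖ * K ≤ (1 - KZ) / 3 := by
    by_cases hLs : Lstar = 0
    · have e0 : Lstar * ‖θ‖ * K = 0 := by rw [hLs]; ring
      rw [e0]
      linarith only [hKZlt]
    · have hLspos : 0 < Lstar := lt_of_le_of_ne hLstar0 (Ne.symm hLs)
      have hr0le2 : r₀ ≤ (1 - KZ) / (3 * K * Lstar) := by
        rw [hr₀, if_neg hLs]; exact min_le_right _ _
      have hθlt : ‖θ‖ < (1 - KZ) / (3 * K * Lstar) := lt_of_lt_of_le hθr hr0le2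
      have h1 : Lstar * ‖θ‖ * K ≤ Lstar * ((1 - KZ) / (3 * K * Lstar)) * K :=
        mul_le_mul_of_nonneg_right (mul_le_mul_of_nonneg_left hθlt.le hLstar0) hK0.le
      have heq : Lstar * ((1 - KZ) / (3 * K * Lstar)) * K = (1 - KZ) / 3 := by
        field_simp
      linarith only [h1, heq]
  -- nrm θ v ≤ K * (Y + Rr)
  have hvnorm : S.nrm θ v ≤ K * (Y + Rr) := by
    have h1 := hK θ hθ 0 h0 v
    have hsplit : v = vs + r := by rw [hrdef]; abel
    have h2 : S.nrm 0 v ≤ Y + Rr := by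
      calc S.nrm 0 v = S.nrm 0 (vs + r) := by rw [← hsplit]
      _ ≤ Y + Rr := S.nrm_add_le h0 vs r
    calc S.nrm θ v ≤ K * S.nrm 0 v := h1
    _ ≤ K * (Y + Rr) := mul_le_mul_of_nonneg_left h2 hK0.le
  -- Rr ≤ (1-KZ)/2 * Y
  have hRr2 : Rr ≤ (1 - KZ) / 2 * Y := by
    have h1 : Rr ≤ Lstar * ‖θ‖ * K * (Y + Rr) := by
      have := mul_le_mul_of_nonneg_left hvnorm
        (mul_nonneg hLstar0 (norm_nonneg θ))
      calc Rr ≤ Lstar * ‖θ‖ * S.nrm θ v := hRle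
      _ ≤ Lstar * ‖θ‖ * (K * (Y + Rr)) := this
      _ = Lstar * ‖θ‖ * K * (Y + Rr) := by ring
    have p1 := mul_le_mul_of_nonneg_right htb hRr0
    have p2 := mul_le_mul_of_nonneg_right htb hY0
    have p3 := mul_nonneg hKZ0 hRr0
    linarith only [h1, p1, p2, p3]
  -- z - vs ∈ V 0 and M bounds
  have havs : S.a 0 vs vs = 0 := hVstarsub hvs
  have hzvsV0 : z - vs ∈ S.V 0 := by
    have haz' : (S.aS 0 h0).f z z = 0 := haz
    have havs' : (S.aS 0 h0).f vs vs = 0 := havs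
    show (S.aS 0 h0).f (z - vs) (z - vs) = 0
    rw [(S.aS 0 h0).subL, (S.aS 0 h0).subR, (S.aS 0 h0).subR, haz', havs',
      (S.aS 0 h0).left_zero haz' vs, (S.aS 0 h0).left_zero havs' z]
    ring
  have hipNzvs : S.ip 0 N (z - vs) = 0 := hNW _ hzvsV0
  have hipzvsN : S.ip 0 (z - vs) N = 0 := by
    have h1 := (S.ipS 0 h0).herm N (z - vs)
    rw [FormFamily.ipS_f] at h1
    rw [h1, hipNzvs, map_zero]
  have hMsq : S.nsq 0 (u - vs) = S.nsq 0 (z - vs) + S.nsq 0 N := by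
    have hsplit : u - vs = (z - vs) + N := by rw [hudef]; abel
    have h1 := (S.ipS 0 h0).expand_add (z - vs) N
    rw [FormFamily.ipS_f] at h1
    have e1 : S.nsq 0 (u - vs) = (S.ip 0 ((z - vs) + N) ((z - vs) + N)).re := by
      rw [← hsplit]; rfl
    rw [e1, h1, hipzvsN]
    simp [FormFamily.nsq_eq]
  have hzvs_lb : (1 - KZ) * (zn ^ 2 + Y ^ 2) ≤ S.nsq 0 (z - vs) := by
    have hexp := (S.ipS 0 h0).expand_sub z vs
    rw [FormFamily.ipS_f] at hexp
    have hcross : ‖S.ip 0 z vs‖ ≤ KZ * Y * zn := by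
      have h1 := htrans vs hvs z hzZ
      have h2 : S.ip 0 z vs = (starRingEnd ℂ) (S.ip 0 vs z) := by
        have := (S.ipS 0 h0).herm vs z
        rw [FormFamily.ipS_f] at this
        exact this
      rw [h2, RCLike.norm_conj]
      calc ‖S.ip 0 vs z‖ ≤ KZ * S.nrm 0 vs * S.nrm 0 z := h1
      _ = KZ * Y * zn := rfl
    have hre : |(S.ip 0 z vs).re| ≤ KZ * Y * zn := by
      calc |(S.ip 0 z vs).re| ≤ ‖S.ip 0 z vs‖ := by
            exact Complex.abs_re_le_norm _
      _ ≤ KZ * Y * zn := hcross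
    have habs := abs_le.1 hre
    have e1 : S.nsq 0 (z - vs) = (S.ip 0 (z - vs) (z - vs)).re := rfl
    have e2 : (S.ip 0 z z).re = S.nsq 0 z := rfl
    have e3 : (S.ip 0 vs vs).re = S.nsq 0 vs := rfl
    have e4 : S.nsq 0 z = zn ^ 2 := (S.nrm_sq h0 z).symm
    have e5 : S.nsq 0 vs = Y ^ 2 := (S.nrm_sq h0 vs).symm
    rw [e1, hexp, e2, e3, e4, e5]
    linarith only [habs.2, mul_nonneg hKZ0 (sq_nonneg (zn - Y))]
  -- triangle
  have hDM : S.nrm 0 (u - vs) ≤ S.nrm 0 w + Rr := by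
    have hsplit : u - vs = w + r := by rw [hwdef, hrdef]; abel
    calc S.nrm 0 (u - vs) = S.nrm 0 (w + r) := by rw [← hsplit]
    _ ≤ S.nrm 0 w + Rr := S.nrm_add_le h0 w r
  -- final algebra
  have hM2 : (1 - KZ) * (zn ^ 2 + Y ^ 2) ≤ S.nrm 0 (u - vs) ^ 2 := by
    rw [S.nrm_sq h0 (u - vs), hMsq]
    have hnn := S.nsq_nonneg h0 N
    linarith only [hzvs_lb, hnn]
  have hMD2 : S.nrm 0 (u - vs) ≤ S.nrm 0 w + (1 - KZ) / 2 * Y := by linarith only [hDM, hRr2]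
  have hkey : (1 - KZ) / 3 * zn ^ 2 ≤ S.nrm 0 w ^ 2 :=
    alg_key (1 - KZ) (S.nrm 0 w) (S.nrm 0 (u - vs)) Y zn hKZlt (by linarith)
      (S.nrm_nonneg 0 w) (S.nrm_nonneg 0 (u - vs)) hY0 hzn0 hM2 hMD2
  -- assemble
  have hw2 : (1 - KZ) / 3 * zn ^ 2 ≤ S.nsq 0 w := by
    rw [← S.nrm_sq h0]; exact hkey
  have hw3 : (1 - KZ) / 3 * zn ^ 2 ≤ K ^ 2 * S.nsq θ w := le_trans hw2 hnsqw
  have hK2 : (0 : ℝ) < K ^ 2 := by positivity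
  have hw4 : (1 - KZ) / (3 * K ^ 2) * zn ^ 2 ≤ S.nsq θ w := by
    rw [div_mul_eq_mul_div, div_le_iff₀ (show (0 : ℝ) < 3 * K ^ 2 by positivity)]
    linarith only [hw3]
  have hγθ : 0 ≤ γ * ‖θ‖ ^ 2 := by positivity
  have e4 : S.nsq 0 z = zn ^ 2 := (S.nrm_sq h0 z).symm
  calc γ * (1 - KZ) / (3 * K ^ 2) * ‖θ‖ ^ 2 * S.nsq 0 z
      = γ * ‖θ‖ ^ 2 * ((1 - KZ) / (3 * K ^ 2) * zn ^ 2) := by rw [e4]; ring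
  _ ≤ γ * ‖θ‖ ^ 2 * S.nsq θ w := mul_le_mul_of_nonneg_left hw4 hγθ
  _ = γ * ‖θ‖ ^ 2 * S.nsq θ w := rfl
  _ ≤ (S.a θ w w).re := hH3w
  _ = (S.a θ u u).re := hauu.symm
end
end

section
/- For every θ ∈ Θ with |θ| ≤ ν₀/(2 L_a) and every v ∈ V₀, one has ‖𝒩_θ v − N_θ v‖₀ ≤ κ₂ |θ|² ‖v‖₀, where κ₂ = ν₀⁻¹ (2 L_a² ν₀⁻¹ + K_{a′}). -/
noncomputable section

open scoped Classical

section AuxLemmas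

variable {n : ℕ} {H : Type*} [NormedAddCommGroup H] [InnerProductSpace ℂ H] [CompleteSpace H]

lemma re_sub_le_norms (A B : ℂ) : (A - B).re ≤ ‖A‖ + ‖B‖ := by
  have hA := abs_le.mp (Complex.abs_re_le_norm A)
  have hB := abs_le.mp (Complex.abs_re_le_norm B)
  rw [Complex.sub_re]
  linarith [hA.1, hA.2, hB.1, hB.2]

lemma FF_a_subL (S : FormFamily n H) {θ : EuclideanSpace ℝ (Fin n)} (hθ : θ ∈ S.Θ)
    (u v w : H) : S.a θ (u - v) w = S.a θ u w - S.a θ v w := by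
  have ha : S.a θ (-v) w = -S.a θ v w := by simpa using S.a_smulL θ hθ (-1) v w
  rw [sub_eq_add_neg, S.a_addL θ hθ, ha, sub_eq_add_neg]

lemma FF_ip_subL (S : FormFamily n H) {θ : EuclideanSpace ℝ (Fin n)} (hθ : θ ∈ S.Θ)
    (u v w : H) : S.ip θ (u - v) w = S.ip θ u w - S.ip θ v w := by
  have ha : S.a θ (-v) w = -S.a θ v w := by simpa using S.a_smulL θ hθ (-1) v w
  have hb : S.b θ (-v) w = -S.b θ v w := by simpa using S.b_smulL θ hθ (-1) v w
  simp only [FormFamily.ip, sub_eq_add_neg, S.a_addL θ hθ, S.b_addL θ hθ, ha, hb]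
  ring

lemma FF_nsq_eq (S : FormFamily n H) (θ : EuclideanSpace ℝ (Fin n)) (u : H) :
    S.nsq θ u = (S.a θ u u).re + (S.b θ u u).re := by
  simp [FormFamily.nsq, FormFamily.ip]

lemma FF_nsq_nonneg (S : FormFamily n H) {θ : EuclideanSpace ℝ (Fin n)} (hθ : θ ∈ S.Θ)
    (u : H) : 0 ≤ S.nsq θ u := by
  rw [FF_nsq_eq]; exact add_nonneg (S.a_nonneg θ hθ u) (S.b_nonneg θ hθ u)

lemma FF_nrm_sq (S : FormFamily n H) {θ : EuclideanSpace ℝ (Fin n)} (hθ : θ ∈ S.Θ)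
    (u : H) : S.nrm θ u ^ 2 = S.nsq θ u := Real.sq_sqrt (FF_nsq_nonneg S hθ u)

lemma FF_nrm_nonneg (S : FormFamily n H) (θ : EuclideanSpace ℝ (Fin n)) (u : H) :
    0 ≤ S.nrm θ u := Real.sqrt_nonneg _

end AuxLemmas

set_option maxHeartbeats 1000000 in
theorem statement10
    {n : ℕ} (hn : 0 < n) {H : Type*} [NormedAddCommGroup H] [InnerProductSpace ℂ H]
    [CompleteSpace H] (S : FormFamily n H)
    (K : ℝ) (hK0 : 0 < K)
    (hK : ∀ θ₁ ∈ S.Θ, ∀ θ₂ ∈ S.Θ, ∀ u : H, S.nrm θ₁ u ≤ K * S.nrm θ₂ u)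
    (La : ℝ) (hLa0 : 0 < La)
    (hLa : ∀ θ₁ ∈ S.Θ, ∀ θ₂ ∈ S.Θ, ∀ u w : H,
      ‖S.a θ₁ u w - S.a θ₂ u w‖ ≤ La * ‖θ₁ - θ₂‖ * S.nrm θ₁ u * S.nrm θ₁ w)
    (h0 : (0 : EuclideanSpace ℝ (Fin n)) ∈ S.Θ)
    (ν₀ : ℝ) (hν₀ : 0 < ν₀)
    (hgap0 : ∀ w ∈ S.W 0, ν₀ * S.nsq 0 w ≤ (S.a 0 w w).re)
    (Ncal : EuclideanSpace ℝ (Fin n) → H → H)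
    (hNcal : ∀ θ ∈ S.Θ, ‖θ‖ ≤ ν₀ / (2 * La) → ∀ v ∈ S.V 0,
      Ncal θ v ∈ S.W 0 ∧ ∀ w ∈ S.W 0, S.a θ (Ncal θ v) w = - S.a θ v w)
    (hint : (0 : EuclideanSpace ℝ (Fin n)) ∈ interior S.Θ)
    (a' : H → H → Fin n → ℂ) (a'' : H → H → Fin n → Fin n → ℂ)
    (Ka' : ℝ) (hKa' : 0 ≤ Ka') (Ka'' : ℝ) (hKa'' : 0 ≤ Ka'')
    (hH4a : ∀ θ ∈ S.Θ, ∀ v ∈ S.V 0, ∀ u : H,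
      ‖S.a θ v u - (∑ j, a' v u j * (θ j : ℂ))‖ ≤ Ka' * ‖θ‖ ^ 2 * S.nrm 0 v * S.nrm 0 u)
    (hH4b : ∀ θ ∈ S.Θ, ∀ v ∈ S.V 0, ∀ vt ∈ S.V 0,
      ‖S.a θ v vt - (∑ j, ∑ k, a'' v vt j k * (θ j : ℂ) * (θ k : ℂ))‖ ≤
        Ka'' * ‖θ‖ ^ 3 * S.nrm 0 v * S.nrm 0 vt)
    (N : EuclideanSpace ℝ (Fin n) → H → H)
    (hN : ∀ (θ : EuclideanSpace ℝ (Fin n)), ∀ v ∈ S.V 0,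
      N θ v ∈ S.W 0 ∧ ∀ w ∈ S.W 0, S.a 0 (N θ v) w = -(∑ j, a' v w j * (θ j : ℂ)))
 :
    ∀ θ ∈ S.Θ, ‖θ‖ ≤ ν₀ / (2 * La) → ∀ v ∈ S.V 0,
      S.nrm 0 (Ncal θ v - N θ v) ≤
        ν₀⁻¹ * (2 * La ^ 2 * ν₀⁻¹ + Ka') * ‖θ‖ ^ 2 * S.nrm 0 v := by

  intro θ hθ hθν v hv
  obtain ⟨hNcW, hNceq⟩ := hNcal θ hθ hθν v hv
  obtain ⟨hNW, hNeq⟩ := hN θ v hv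
  set Nc := Ncal θ v with hNcdef
  set Nl := N θ v with hNldef
  set d := Nc - Nl with hddef
  set x := S.nrm 0 Nc with hxdef
  set y := S.nrm 0 d with hydef
  set p := S.nrm 0 v with hpdef
  have hx0 : 0 ≤ x := FF_nrm_nonneg S 0 Nc
  have hy0 : 0 ≤ y := FF_nrm_nonneg S 0 d
  have hp0 : 0 ≤ p := FF_nrm_nonneg S 0 v
  have he0 : (0:ℝ) ≤ ‖θ‖ := norm_nonneg θ
  -- a₀(v, u) = 0 for every u, via (H4) at θ = 0
  have hzero : ∀ u : H, S.a 0 v u = 0 := by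
    intro u
    have h := hH4a 0 h0 v hv u
    have hs : (∑ j, a' v u j * (((0:EuclideanSpace ℝ (Fin n)) j : ℝ) : ℂ)) = 0 := by
      simp
    rw [hs, norm_zero, sub_zero] at h
    simpa using norm_le_zero_iff.mp (by simpa using h)
  -- d ∈ W₀
  have hdW : d ∈ S.W 0 := by
    intro v' hv'
    have h1 := hNcW v' hv'
    have h2 := hNW v' hv'
    rw [hddef, FF_ip_subL S h0, h1, h2, sub_zero]
  -- Lipschitz bound specialised to θ₁ := 0
  have hLa0θ : ∀ u w : H, ‖S.a 0 u w - S.a θ u w‖ ≤ La * ‖θ‖ * S.nrm 0 u * S.nrm 0 w := by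
    intro u w
    have h := hLa 0 h0 θ hθ u w
    simpa using h
  have hLae : La * ‖θ‖ ≤ ν₀ / 2 := by
    have := mul_le_mul_of_nonneg_left hθν hLa0.le
    calc La * ‖θ‖ ≤ La * (ν₀ / (2 * La)) := this
    _ = ν₀ / 2 := by field_simp
  -- Step C : ν₀ * x ≤ 2 La ‖θ‖ p, hence x ≤ ν₀⁻¹ (2 La ‖θ‖ p)
  have hgNc := hgap0 Nc hNcW
  have hkeyC : S.a 0 Nc Nc = (S.a 0 Nc Nc - S.a θ Nc Nc) - (S.a θ v Nc - S.a 0 v Nc) := by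
    rw [hNceq Nc hNcW, hzero Nc]; ring
  have hreC : (S.a 0 Nc Nc).re ≤ La * ‖θ‖ * x * x + La * ‖θ‖ * p * x := by
    rw [hkeyC]
    have h1 := re_sub_le_norms (S.a 0 Nc Nc - S.a θ Nc Nc) (S.a θ v Nc - S.a 0 v Nc)
    have h2 := hLa0θ Nc Nc
    have h3 : ‖S.a θ v Nc - S.a 0 v Nc‖ ≤ La * ‖θ‖ * p * x := by
      rw [norm_sub_rev]; exact hLa0θ v Nc
    linarith
  have hquadC : ν₀ * x ^ 2 ≤ La * ‖θ‖ * x * x + La * ‖θ‖ * p * x := by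
    rw [FF_nrm_sq S h0]; linarith
  have hC' : ν₀ * x ≤ 2 * La * ‖θ‖ * p := by
    rcases hx0.eq_or_lt with h | hxpos
    · rw [← h, mul_zero]; positivity
    · have hmul := mul_le_mul_of_nonneg_right hLae (sq_nonneg x)
      have : (ν₀ * x) * x ≤ (2 * La * ‖θ‖ * p) * x := by nlinarith
      exact le_of_mul_le_mul_right this hxpos
  have hC : x ≤ ν₀⁻¹ * (2 * La * ‖θ‖ * p) := by
    calc x = ν₀⁻¹ * (ν₀ * x) := by field_simp
    _ ≤ ν₀⁻¹ * (2 * La * ‖θ‖ * p) :=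
      mul_le_mul_of_nonneg_left hC' (inv_nonneg.mpr hν₀.le)
  -- Step D : estimate on d
  have hgd := hgap0 d hdW
  have hkeyD : S.a 0 d d = (S.a 0 Nc d - S.a θ Nc d)
      - (S.a θ v d - ∑ j, a' v d j * ((θ j : ℝ) : ℂ)) := by
    have hsplit : S.a 0 d d = S.a 0 Nc d - S.a 0 Nl d := by
      rw [hddef]; exact FF_a_subL S h0 Nc Nl d
    rw [hsplit, hNceq d hdW, hNeq d hdW]; ring
  have hHa := hH4a θ hθ v hv d
  have hreD : (S.a 0 d d).re ≤ La * ‖θ‖ * x * y + Ka' * ‖θ‖ ^ 2 * p * y := by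
    rw [hkeyD]
    have h1 := re_sub_le_norms (S.a 0 Nc d - S.a θ Nc d)
      (S.a θ v d - ∑ j, a' v d j * ((θ j : ℝ) : ℂ))
    have h2 := hLa0θ Nc d
    linarith
  have hquadD : ν₀ * y ^ 2 ≤ La * ‖θ‖ * x * y + Ka' * ‖θ‖ ^ 2 * p * y := by
    rw [FF_nrm_sq S h0]; linarith
  have hD : ν₀ * y ≤ La * ‖θ‖ * x + Ka' * ‖θ‖ ^ 2 * p := by
    rcases hy0.eq_or_lt with h | hypos
    · rw [← h, mul_zero]; positivity
    · have : (ν₀ * y) * y ≤ (La * ‖θ‖ * x + Ka' * ‖θ‖ ^ 2 * p) * y := by nlinarith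
      exact le_of_mul_le_mul_right this hypos
  have hstep2 : La * ‖θ‖ * x ≤ La * ‖θ‖ * (ν₀⁻¹ * (2 * La * ‖θ‖ * p)) :=
    mul_le_mul_of_nonneg_left hC (by positivity)
  have hfinal : ν₀ * y ≤ (2 * La ^ 2 * ν₀⁻¹ + Ka') * ‖θ‖ ^ 2 * p := by
    have hexp : (2 * La ^ 2 * ν₀⁻¹ + Ka') * ‖θ‖ ^ 2 * p
        = La * ‖θ‖ * (ν₀⁻¹ * (2 * La * ‖θ‖ * p)) + Ka' * ‖θ‖ ^ 2 * p := by ring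
    rw [hexp]
    linarith [hD, hstep2]
  calc y = ν₀⁻¹ * (ν₀ * y) := by field_simp
  _ ≤ ν₀⁻¹ * ((2 * La ^ 2 * ν₀⁻¹ + Ka') * ‖θ‖ ^ 2 * p) :=
    mul_le_mul_of_nonneg_left hfinal (inv_nonneg.mpr hν₀.le)
  _ = ν₀⁻¹ * (2 * La ^ 2 * ν₀⁻¹ + Ka') * ‖θ‖ ^ 2 * p := by ring
end
end

section
/- Suppose there exist a constant C > 0 and a non-negative sesquilinear form c on H such that (i) c is ‖·‖_θ-compact for every θ ∈ Θ, i.e. every sequence (u_m) in H that is bounded in ‖·‖_θ has a subsequence (u_{m_k}) and an element u ∈ H with c[u_{m_k} − u] → 0, and (ii) ‖w‖_θ² ≤ C a_θ[w] + c[w] for all w ∈ W_θ and all θ ∈ Θ (assumption (H1′)). Then the gap condition (H1) holds: for every θ ∈ Θ there exists ν_θ > 0 such that a_θ[w] ≥ ν_θ ‖w‖_θ² for all w ∈ W_θ. -/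
noncomputable section

open scoped Classical

section Aux
open Filter
variable {H : Type*} [NormedAddCommGroup H] [InnerProductSpace ℂ H]

lemma sesq_negL (f : H → H → ℂ)
    (smulL : ∀ (t : ℂ) (u w : H), f (t • u) w = t * f u w) (u w : H) :
    f (-u) w = - f u w := by
  rw [← neg_one_smul ℂ u, smulL]; ring

lemma sesq_negR (f : H → H → ℂ)
    (smulR : ∀ (t : ℂ) (u w : H), f u (t • w) = starRingEnd ℂ t * f u w) (u w : H) :
    f u (-w) = - f u w := by
  rw [← neg_one_smul ℂ w, smulR]; simp

lemma sesq_subL (f : H → H → ℂ)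
    (addL : ∀ u v w : H, f (u + v) w = f u w + f v w)
    (smulL : ∀ (t : ℂ) (u w : H), f (t • u) w = t * f u w) (u v w : H) :
    f (u - v) w = f u w - f v w := by
  rw [sub_eq_add_neg, addL, sesq_negL f smulL, sub_eq_add_neg]

lemma sesq_subR (f : H → H → ℂ)
    (addR : ∀ u v w : H, f u (v + w) = f u v + f u w)
    (smulR : ∀ (t : ℂ) (u w : H), f u (t • w) = starRingEnd ℂ t * f u w) (u v w : H) :
    f u (v - w) = f u v - f u w := by
  rw [sub_eq_add_neg, addR, sesq_negR f smulR, sub_eq_add_neg]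

lemma sesq_diag_sub_le (f : H → H → ℂ)
    (addL : ∀ u v w : H, f (u + v) w = f u w + f v w)
    (smulL : ∀ (t : ℂ) (u w : H), f (t • u) w = t * f u w)
    (addR : ∀ u v w : H, f u (v + w) = f u v + f u w)
    (smulR : ∀ (t : ℂ) (u w : H), f u (t • w) = starRingEnd ℂ t * f u w)
    (nonneg : ∀ u : H, 0 ≤ (f u u).re) (u v : H) :
    (f (u - v) (u - v)).re ≤ 2 * (f u u).re + 2 * (f v v).re := by
  have h1 : f (u + v) (u + v) + f (u - v) (u - v) = 2 * f u u + 2 * f v v := by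
    simp only [sub_eq_add_neg, addL, addR, sesq_negL f smulL, sesq_negR f smulR]
    ring
  have h3 := congrArg Complex.re h1
  have h2 := nonneg (u + v)
  simp only [Complex.add_re, Complex.mul_re] at h3
  norm_num at h3
  linarith

lemma sesq_tendstoL (f : H → H → ℂ)
    (addL : ∀ u v w : H, f (u + v) w = f u w + f v w)
    (smulL : ∀ (t : ℂ) (u w : H), f (t • u) w = t * f u w)
    (M : ℝ) (bdd : ∀ u w : H, ‖f u w‖ ≤ M * ‖u‖ * ‖w‖)
    (v : ℕ → H) (y w : H) (hv : Tendsto v atTop (nhds y)) :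
    Tendsto (fun k => f (v k) w) atTop (nhds (f y w)) := by
  rw [tendsto_iff_norm_sub_tendsto_zero]
  have hvn : Tendsto (fun k => ‖v k - y‖) atTop (nhds 0) := by
    rw [← tendsto_iff_norm_sub_tendsto_zero]; exact hv
  apply squeeze_zero (fun k => norm_nonneg _) (g := fun k => M * ‖v k - y‖ * ‖w‖)
  · intro k
    have : f (v k) w - f y w = f (v k - y) w := by
      rw [sesq_subL f addL smulL]
    rw [this]; exact bdd _ _
  · have : Tendsto (fun k => M * ‖v k - y‖ * ‖w‖) atTop (nhds (M * 0 * ‖w‖)) :=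
      (hvn.const_mul M).mul_const _
    simpa using this

lemma sesq_tendsto_diag (f : H → H → ℂ)
    (addL : ∀ u v w : H, f (u + v) w = f u w + f v w)
    (smulL : ∀ (t : ℂ) (u w : H), f (t • u) w = t * f u w)
    (addR : ∀ u v w : H, f u (v + w) = f u v + f u w)
    (smulR : ∀ (t : ℂ) (u w : H), f u (t • w) = starRingEnd ℂ t * f u w)
    (M : ℝ) (bdd : ∀ u w : H, ‖f u w‖ ≤ M * ‖u‖ * ‖w‖)
    (v : ℕ → H) (y : H) (hv : Tendsto v atTop (nhds y)) :
    Tendsto (fun k => f (v k) (v k)) atTop (nhds (f y y)) := by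
  rw [tendsto_iff_norm_sub_tendsto_zero]
  have hvn : Tendsto (fun k => ‖v k - y‖) atTop (nhds 0) := by
    rw [← tendsto_iff_norm_sub_tendsto_zero]; exact hv
  apply squeeze_zero (fun k => norm_nonneg _)
    (g := fun k => M * ‖v k - y‖ * ‖v k‖ + M * ‖y‖ * ‖v k - y‖)
  · intro k
    have hd : f (v k) (v k) - f y y = f (v k - y) (v k) + f y (v k - y) := by
      rw [sesq_subL f addL smulL, sesq_subR f addR smulR]; ring
    rw [hd]
    calc ‖f (v k - y) (v k) + f y (v k - y)‖
        ≤ ‖f (v k - y) (v k)‖ + ‖f y (v k - y)‖ := norm_add_le _ _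
      _ ≤ M * ‖v k - y‖ * ‖v k‖ + M * ‖y‖ * ‖v k - y‖ := add_le_add (bdd _ _) (bdd _ _)
  · have hn : Tendsto (fun k => ‖v k‖) atTop (nhds ‖y‖) := hv.norm
    have : Tendsto (fun k => M * ‖v k - y‖ * ‖v k‖ + M * ‖y‖ * ‖v k - y‖) atTop
        (nhds (M * 0 * ‖y‖ + M * ‖y‖ * 0)) :=
      ((hvn.const_mul M).mul hn).add ((tendsto_const_nhds (x := M * ‖y‖)).mul hvn)
    simpa using this

end Aux

theorem statement17
    {n : ℕ} (hn : 0 < n) {H : Type*} [NormedAddCommGroup H] [InnerProductSpace ℂ H]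
    [CompleteSpace H] (S : FormFamily n H)
    (K : ℝ) (hK0 : 0 < K)
    (hK : ∀ θ₁ ∈ S.Θ, ∀ θ₂ ∈ S.Θ, ∀ u : H, S.nrm θ₁ u ≤ K * S.nrm θ₂ u)
    (C : ℝ) (hC : 0 < C)
    (c : H → H → ℂ)
    (c_addL : ∀ u v w : H, c (u + v) w = c u w + c v w)
    (c_smulL : ∀ (t : ℂ) (u w : H), c (t • u) w = t * c u w)
    (c_addR : ∀ u v w : H, c u (v + w) = c u v + c u w)
    (c_smulR : ∀ (t : ℂ) (u w : H), c u (t • w) = starRingEnd ℂ t * c u w)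
    (c_nonneg : ∀ u : H, 0 ≤ (c u u).re)
    (c_im : ∀ u : H, (c u u).im = 0)
    (hcpt : ∀ θ ∈ S.Θ, ∀ u : ℕ → H, (∃ B : ℝ, ∀ m : ℕ, S.nrm θ (u m) ≤ B) →
      ∃ φ : ℕ → ℕ, StrictMono φ ∧ ∃ x : H,
        Filter.Tendsto (fun k => (c (u (φ k) - x) (u (φ k) - x)).re)
          Filter.atTop (nhds 0))
    (hH1' : ∀ θ ∈ S.Θ, ∀ w ∈ S.W θ, S.nsq θ w ≤ C * (S.a θ w w).re + (c w w).re)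
 :
    ∀ θ ∈ S.Θ, ∃ νθ : ℝ, 0 < νθ ∧ ∀ w ∈ S.W θ, νθ * S.nsq θ w ≤ (S.a θ w w).re := by
  intro θ hθ
  by_contra hcon
  push_neg at hcon
  have aL := S.a_addL θ hθ
  have aS := S.a_smulL θ hθ
  have aR := S.a_addR θ hθ
  have aSR := S.a_smulR θ hθ
  have a0 := S.a_nonneg θ hθ
  have bL := S.b_addL θ hθ
  have bS := S.b_smulL θ hθ
  have bR := S.b_addR θ hθ
  have bSR := S.b_smulR θ hθ
  have b0 := S.b_nonneg θ hθ
  obtain ⟨Ma, hMa⟩ := S.a_bdd θ hθ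
  obtain ⟨Mb, hMb⟩ := S.b_bdd θ hθ
  have ipL : ∀ u v w : H, S.ip θ (u + v) w = S.ip θ u w + S.ip θ v w := by
    intro u v w; simp only [FormFamily.ip, aL, bL]; ring
  have ipS : ∀ (t : ℂ) (u w : H), S.ip θ (t • u) w = t * S.ip θ u w := by
    intro t u w; simp only [FormFamily.ip, aS, bS]; ring
  have ipR : ∀ u v w : H, S.ip θ u (v + w) = S.ip θ u v + S.ip θ u w := by
    intro u v w; simp only [FormFamily.ip, aR, bR]; ring
  have ipSR : ∀ (t : ℂ) (u w : H), S.ip θ u (t • w) = starRingEnd ℂ t * S.ip θ u w := by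
    intro t u w; simp only [FormFamily.ip, aSR, bSR]; ring
  have ipbdd : ∀ u w : H, ‖S.ip θ u w‖ ≤ (Ma + Mb) * ‖u‖ * ‖w‖ := by
    intro u w
    simp only [FormFamily.ip]
    calc ‖S.a θ u w + S.b θ u w‖ ≤ ‖S.a θ u w‖ + ‖S.b θ u w‖ := norm_add_le _ _
      _ ≤ Ma * ‖u‖ * ‖w‖ + Mb * ‖u‖ * ‖w‖ := add_le_add (hMa u w) (hMb u w)
      _ = (Ma + Mb) * ‖u‖ * ‖w‖ := by ring
  have nsq_eq : ∀ u : H, S.nsq θ u = (S.a θ u u).re + (S.b θ u u).re := by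
    intro u; simp [FormFamily.nsq, FormFamily.ip]
  have nsq_nonneg : ∀ u : H, 0 ≤ S.nsq θ u := fun u => by
    rw [nsq_eq]; exact add_nonneg (a0 u) (b0 u)
  have Wsub : ∀ u v : H, u ∈ S.W θ → v ∈ S.W θ → u - v ∈ S.W θ := by
    intro u v hu hv
    intro z hz
    rw [sesq_subL _ ipL ipS, hu z hz, hv z hz, sub_zero]
  have Wsmul : ∀ (t : ℂ) (u : H), u ∈ S.W θ → t • u ∈ S.W θ := by
    intro t u hu z hz
    rw [ipS, hu z hz, mul_zero]
  -- the sequence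
  choose w hwW hwlt using fun m : ℕ => hcon (1/((m:ℝ)+1)) (by positivity)
  have hpos : ∀ m, 0 < S.nsq θ (w m) := by
    intro m
    rcases lt_or_eq_of_le (nsq_nonneg (w m)) with h | h
    · exact h
    · exfalso
      have h2 := hwlt m
      rw [← h, mul_zero] at h2
      exact absurd h2 (not_lt.mpr (a0 (w m)))
  set u : ℕ → H := fun m => (((Real.sqrt (S.nsq θ (w m)))⁻¹ : ℝ) : ℂ) • w m with hu
  set t : ℕ → ℝ := fun m => (Real.sqrt (S.nsq θ (w m)))⁻¹ with ht
  have htpos : ∀ m, 0 < t m := fun m => inv_pos.mpr (Real.sqrt_pos.mpr (hpos m))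
  have hts : ∀ m, t m * t m * S.nsq θ (w m) = 1 := by
    intro m
    have hsq : Real.sqrt (S.nsq θ (w m)) * Real.sqrt (S.nsq θ (w m)) = S.nsq θ (w m) :=
      Real.mul_self_sqrt (nsq_nonneg _)
    have hne : Real.sqrt (S.nsq θ (w m)) ≠ 0 := ne_of_gt (Real.sqrt_pos.mpr (hpos m))
    rw [ht]
    simp only []
    rw [← hsq]
    field_simp
    rw [Real.sqrt_sq (Real.sqrt_nonneg _)]
  have hueq : ∀ m, u m = ((t m : ℝ) : ℂ) • w m := fun m => rfl
  have hscale_a : ∀ m, (S.a θ (u m) (u m)).re = t m * t m * (S.a θ (w m) (w m)).re := by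
    intro m
    have h1 : S.a θ (u m) (u m) = ((t m * t m : ℝ) : ℂ) * S.a θ (w m) (w m) := by
      rw [hueq m, aS, aSR, Complex.conj_ofReal]
      push_cast; ring
    rw [h1, Complex.re_ofReal_mul]
  have hscale_b : ∀ m, (S.b θ (u m) (u m)).re = t m * t m * (S.b θ (w m) (w m)).re := by
    intro m
    have h1 : S.b θ (u m) (u m) = ((t m * t m : ℝ) : ℂ) * S.b θ (w m) (w m) := by
      rw [hueq m, bS, bSR, Complex.conj_ofReal]
      push_cast; ring
    rw [h1, Complex.re_ofReal_mul]
  have hnsq1 : ∀ m, S.nsq θ (u m) = 1 := by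
    intro m
    rw [nsq_eq, hscale_a, hscale_b, ← mul_add, ← nsq_eq]
    exact hts m
  have ha : ∀ m, (S.a θ (u m) (u m)).re < 1/((m:ℝ)+1) := by
    intro m
    rw [hscale_a]
    have h1 : t m * t m * (S.a θ (w m) (w m)).re
        < t m * t m * (1/((m:ℝ)+1) * S.nsq θ (w m)) :=
      mul_lt_mul_of_pos_left (hwlt m) (mul_pos (htpos m) (htpos m))
    have h2 : t m * t m * (1/((m:ℝ)+1) * S.nsq θ (w m)) = 1/((m:ℝ)+1) := by
      rw [show t m * t m * (1/((m:ℝ)+1) * S.nsq θ (w m))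
          = 1/((m:ℝ)+1) * (t m * t m * S.nsq θ (w m)) by ring, hts m, mul_one]
    linarith
  have huW : ∀ m, u m ∈ S.W θ := fun m => Wsmul _ _ (hwW m)
  have hbdd : ∃ B : ℝ, ∀ m, S.nrm θ (u m) ≤ B := by
    refine ⟨1, fun m => ?_⟩
    rw [FormFamily.nrm, hnsq1]
    simp
  obtain ⟨φ, hφ, x, hcx⟩ := hcpt θ hθ u hbdd
  set v : ℕ → H := fun k => u (φ k) with hv
  have hcx' : Filter.Tendsto (fun k => (c (v k - x) (v k - x)).re)
      Filter.atTop (nhds 0) := hcx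
  have hav : Filter.Tendsto (fun k => (S.a θ (v k) (v k)).re) Filter.atTop (nhds 0) := by
    apply squeeze_zero (fun k => a0 _) (g := fun k : ℕ => 1/((k:ℝ)+1))
    · intro k
      have h1 := (ha (φ k)).le
      have hk : (k:ℝ) ≤ (φ k : ℝ) := by exact_mod_cast hφ.le_apply
      have h2 : (1:ℝ)/((φ k : ℝ)+1) ≤ 1/((k:ℝ)+1) :=
        one_div_le_one_div_of_le (by positivity) (by linarith)
      exact le_trans h1 h2
    · exact tendsto_one_div_add_atTop_nhds_zero_nat
  obtain ⟨c₁, c₂, hc₁, hequiv⟩ := S.equivNorm θ hθ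
  have hlow : ∀ z : H, c₁ * ‖z‖^2 ≤ S.nsq θ z := by
    intro z; rw [nsq_eq]; exact (hequiv z).1
  have hvC : CauchySeq v := by
    rw [Metric.cauchySeq_iff]
    intro ε hε
    set δ := c₁ * ε^2 / (8 * (C+1)) with hδdef
    have hδ : 0 < δ := by positivity
    have hN1 := hav.eventually (eventually_lt_nhds hδ)
    have hN2 := hcx'.eventually (eventually_lt_nhds hδ)
    obtain ⟨N, hN⟩ := Filter.eventually_atTop.mp (hN1.and hN2)
    refine ⟨N, fun k hk l hl => ?_⟩
    have hW : v k - v l ∈ S.W θ := Wsub _ _ (huW _) (huW _)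
    have h1 := hH1' θ hθ _ hW
    have h2 : (S.a θ (v k - v l) (v k - v l)).re
        ≤ 2*(S.a θ (v k) (v k)).re + 2*(S.a θ (v l) (v l)).re :=
      sesq_diag_sub_le _ aL aS aR aSR a0 _ _
    have h3 : (c (v k - v l) (v k - v l)).re
        ≤ 2*(c (v k - x) (v k - x)).re + 2*(c (v l - x) (v l - x)).re := by
      have h := sesq_diag_sub_le c c_addL c_smulL c_addR c_smulR c_nonneg (v k - x) (v l - x)
      rwa [sub_sub_sub_cancel_right] at h
    obtain ⟨hak, hck⟩ := hN k hk
    obtain ⟨hal, hcl⟩ := hN l hl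
    have hA : (S.a θ (v k - v l) (v k - v l)).re ≤ 4*δ := by linarith
    have hCC : C * (S.a θ (v k - v l) (v k - v l)).re ≤ C * (4*δ) :=
      mul_le_mul_of_nonneg_left hA hC.le
    have key : S.nsq θ (v k - v l) ≤ 4*(C+1)*δ := by linarith
    have h4 : c₁ * ‖v k - v l‖^2 ≤ 4*(C+1)*δ := le_trans (hlow _) key
    have h5 : ‖v k - v l‖^2 ≤ ε^2/2 := by
      have he : 4*(C+1)*δ = c₁ * (ε^2/2) := by
        rw [hδdef]; field_simp; ring
      rw [he] at h4
      exact (mul_le_mul_iff_right₀ hc₁).mp h4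
    have h6 : ‖v k - v l‖ < ε := by
      nlinarith [norm_nonneg (v k - v l), hε]
    rw [dist_eq_norm]; exact h6
  obtain ⟨y, hy⟩ := cauchySeq_tendsto_of_complete hvC
  have hnsqy : S.nsq θ y = 1 := by
    have h1 : Filter.Tendsto (fun k => S.ip θ (v k) (v k)) Filter.atTop (nhds (S.ip θ y y)) :=
      sesq_tendsto_diag _ ipL ipS ipR ipSR _ ipbdd v y hy
    have h2 : Filter.Tendsto (fun k => (S.ip θ (v k) (v k)).re) Filter.atTop
        (nhds (S.nsq θ y)) := (Complex.continuous_re.tendsto _).comp h1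
    have h3 : (fun k => (S.ip θ (v k) (v k)).re) = fun _ => (1:ℝ) := by
      funext k; exact hnsq1 (φ k)
    rw [h3] at h2
    exact tendsto_nhds_unique h2 tendsto_const_nhds
  have hay : (S.a θ y y).re = 0 := by
    have h1 := sesq_tendsto_diag _ aL aS aR aSR Ma hMa v y hy
    have h2 : Filter.Tendsto (fun k => (S.a θ (v k) (v k)).re) Filter.atTop
        (nhds ((S.a θ y y).re)) := (Complex.continuous_re.tendsto _).comp h1
    exact tendsto_nhds_unique h2 hav
  have hyV : y ∈ S.V θ := by
    have him := S.a_im θ hθ y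
    show S.a θ y y = 0
    apply Complex.ext <;> simp [hay, him]
  have hipy : S.ip θ y y = 0 := by
    have h1 : ∀ k, S.ip θ (v k) y = 0 := fun k => huW (φ k) y hyV
    have h2 := sesq_tendstoL _ ipL ipS _ ipbdd v y y hy
    have h3 : Filter.Tendsto (fun k => S.ip θ (v k) y) Filter.atTop (nhds 0) := by
      simp only [h1]; exact tendsto_const_nhds
    exact tendsto_nhds_unique h2 h3
  have hz : S.nsq θ y = 0 := by
    rw [FormFamily.nsq, hipy]; simp
  rw [hnsqy] at hz
  norm_num at hz
end
end

section
/- There exists a closed subspace Z of 𝒱 such that: (i) 𝒱 = V_⋆ ∔ Z, a closed direct sum (every element of 𝒱 is uniquely v_⋆ + z with v_⋆ ∈ V_⋆ and z ∈ Z); (ii) |(v_⋆, z)| ≤ M_d ‖v_⋆‖ ‖z‖ for all v_⋆ ∈ V_⋆ and z ∈ Z; and (iii) (z, v_⋆) = d(z, v_⋆) for all z ∈ Z and v_⋆ ∈ V_⋆. -/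
noncomputable section

theorem statement19
    {V : Type*} [NormedAddCommGroup V] [InnerProductSpace ℂ V] [CompleteSpace V]
    (Vstar : Submodule ℂ V) (hVstar : IsClosed (Vstar : Set V))
    (d : V → V → ℂ)
    (d_addL : ∀ u v w : V, d (u + v) w = d u w + d v w)
    (d_smulL : ∀ (t : ℂ) (u w : V), d (t • u) w = starRingEnd ℂ t * d u w)
    (d_addR : ∀ u v w : V, d u (v + w) = d u v + d u w)
    (d_smulR : ∀ (t : ℂ) (u w : V), d u (t • w) = t * d u w)
    (d_herm : ∀ u w : V, d u w = starRingEnd ℂ (d w u))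
    (d_nonneg : ∀ u : V, 0 ≤ (d u u).re) (d_im : ∀ u : V, (d u u).im = 0)
    (Md : ℝ) (hMd0 : 0 < Md) (hMd1 : Md < 1)
    (hdbd : ∀ u : V, (d u u).re ≤ Md * ‖u‖ ^ 2) :
    ∃ Z : Submodule ℂ V, IsClosed (Z : Set V) ∧
      (∀ x : V, ∃! p : V × V, p.1 ∈ Vstar ∧ p.2 ∈ Z ∧ x = p.1 + p.2) ∧
      (∀ v ∈ Vstar, ∀ z ∈ Z, ‖(inner ℂ v z : ℂ)‖ ≤ Md * ‖v‖ * ‖z‖) ∧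
      ∀ z ∈ Z, ∀ v ∈ Vstar, (inner ℂ z v : ℂ) = d z v := by
  classical
  -- Cauchy–Schwarz for d, via the pre-inner-product-space core machinery
  let core : PreInnerProductSpace.Core ℂ V :=
    { inner := d
      conj_inner_symm := fun x y => (d_herm x y).symm
      re_inner_nonneg := fun x => by simpa using d_nonneg x
      add_left := d_addL
      smul_left := fun x y r => d_smulL r x y }
  have d_cs : ∀ u w : V, ‖d u w‖ ≤ Md * ‖u‖ * ‖w‖ := by
    intro u w
    have h1 : ‖d u w‖ * ‖d w u‖ ≤ (d u u).re * (d w w).re :=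
      @InnerProductSpace.Core.inner_mul_inner_self_le ℂ V _ _ _ core u w
    have h2 : ‖d w u‖ = ‖d u w‖ := by
      rw [d_herm w u]
      simp
    rw [h2] at h1
    have hu := hdbd u
    have hw := hdbd w
    have hun := d_nonneg u
    have hwn := d_nonneg w
    have hnu : (0:ℝ) ≤ ‖u‖ := norm_nonneg u
    have hnw : (0:ℝ) ≤ ‖w‖ := norm_nonneg w
    refine nonneg_le_nonneg_of_sq_le_sq (by positivity) ?_
    nlinarith [norm_nonneg (d u w)]
  have d_zero_left : ∀ w : V, d 0 w = 0 := fun w => by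
    simpa using d_smulL 0 0 w
  -- the representing operator `T` with ⟪T u, w⟫ = d u w
  let g : V → (V →L[ℂ] ℂ) := fun u =>
    LinearMap.mkContinuous
      { toFun := d u
        map_add' := d_addR u
        map_smul' := fun t w => by simpa using d_smulR t u w }
      (Md * ‖u‖) (fun w => by simpa [mul_assoc] using d_cs u w)
  let Tf : V → V := fun u => (InnerProductSpace.toDual ℂ V).symm (g u)
  have hT : ∀ u w : V, (inner ℂ (Tf u) w : ℂ) = d u w := fun u w =>
    InnerProductSpace.toDual_symm_apply
  have hTnorm : ∀ u, ‖Tf u‖ ≤ Md * ‖u‖ := by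
    intro u
    show ‖(InnerProductSpace.toDual ℂ V).symm (g u)‖ ≤ Md * ‖u‖
    rw [(InnerProductSpace.toDual ℂ V).symm.norm_map (g u)]
    exact LinearMap.mkContinuous_norm_le _ (by positivity) _
  have hTadd : ∀ u v : V, Tf (u + v) = Tf u + Tf v := fun u v =>
    ext_inner_right ℂ fun w => by
      rw [hT, inner_add_left, hT, hT, d_addL]
  have hTsmul : ∀ (t : ℂ) (u : V), Tf (t • u) = t • Tf u := fun t u =>
    ext_inner_right ℂ fun w => by
      rw [hT, inner_smul_left, hT, d_smulL]
  let T : V →L[ℂ] V :=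
    LinearMap.mkContinuous
      { toFun := Tf
        map_add' := hTadd
        map_smul' := fun t u => by simpa using hTsmul t u }
      Md hTnorm
  have hTapp : ∀ u w : V, (inner ℂ (T u) w : ℂ) = d u w := hT
  have hTappnorm : ∀ u, ‖T u‖ ≤ Md * ‖u‖ := hTnorm
  -- the subspace Z
  let Z : Submodule ℂ V :=
    { carrier := { z | ∀ v ∈ Vstar, (inner ℂ z v : ℂ) = d z v }
      add_mem' := fun {a b} ha hb v hv => by
        rw [inner_add_left, ha v hv, hb v hv, d_addL]
      zero_mem' := fun v hv => by
        rw [inner_zero_left, d_zero_left]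
      smul_mem' := fun t a ha v hv => by
        rw [inner_smul_left, ha v hv, d_smulL] }
  have hZmem : ∀ z : V, z ∈ Z ↔ ∀ v ∈ Vstar, (inner ℂ z v : ℂ) = d z v := fun z => Iff.rfl
  -- membership in Z is equivalent to z - T z ⊥ Vstar
  have hZorth : ∀ z : V, z ∈ Z ↔ z - T z ∈ Vstarᗮ := by
    intro z
    rw [Submodule.mem_orthogonal']
    constructor
    · intro h v hv
      rw [inner_sub_left, h v hv, hTapp, sub_self]
    · intro h v hv
      have := h v hv
      rw [inner_sub_left, hTapp, sub_eq_zero] at this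
      exact this
  haveI : CompleteSpace Vstar := hVstar.completeSpace_coe
  set P := Vstar.orthogonalProjectionOnto with hP
  let A : Vstar →L[ℂ] Vstar := P.comp (T.comp Vstar.subtypeL)
  have hAapp : ∀ y : Vstar, A y = P (T y) := fun y => rfl
  have hAnorm : ‖A‖ < 1 := by
    refine lt_of_le_of_lt (ContinuousLinearMap.opNorm_le_bound _ hMd0.le fun y => ?_) hMd1
    calc ‖A y‖ = ‖P (T (y : V))‖ := rfl
      _ ≤ ‖T (y : V)‖ := by
          simpa using P.le_opNorm (T (y : V)) |>.trans
            (by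
              have := Vstar.orthogonalProjectionOnto_norm_le
              have h0 : (0:ℝ) ≤ ‖T (y : V)‖ := norm_nonneg _
              nlinarith)
      _ ≤ Md * ‖y‖ := by simpa using hTappnorm (y : V)
  let U : (Vstar →L[ℂ] Vstar)ˣ := Units.oneSub A hAnorm
  have hUval : (U : Vstar →L[ℂ] Vstar) = 1 - A := rfl
  have hUinj : ∀ y : Vstar, (U : Vstar →L[ℂ] Vstar) y = 0 → y = 0 := by
    intro y hy
    have h1 : ((↑U⁻¹ : Vstar →L[ℂ] Vstar) * (U : Vstar →L[ℂ] Vstar)) y = 0 := by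
      rw [ContinuousLinearMap.mul_apply, hy, map_zero]
    rwa [U.inv_mul, ContinuousLinearMap.one_apply] at h1
  -- key computation: for z with x = v + z, v ∈ Vstar, we have
  -- P (z - T z) = P (x - T x) - (1 - A) ⟨v⟩
  have hkey : ∀ (x : V) (v : Vstar), P ((x - (v : V)) - T (x - (v : V)))
      = P (x - T x) - (U : Vstar →L[ℂ] Vstar) v := by
    intro x v
    have : (x - (v : V)) - T (x - (v : V)) = (x - T x) - ((v : V) - T (v : V)) := by
      rw [map_sub]; abel
    rw [this, map_sub]
    congr 1
    have hPv : P (v : V) = v := Submodule.orthogonalProjectionOnto_mem_subspace_eq_self v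
    rw [map_sub, hPv, hUval]
    simp [ContinuousLinearMap.sub_apply, ContinuousLinearMap.one_apply, hAapp]
  refine ⟨Z, ?_, ?_, ?_, fun z hz v hv => hz v hv⟩
  · -- closedness
    have hset : (Z : Set V) = ⋂ v ∈ Vstar, { z : V | (inner ℂ z v : ℂ) = (inner ℂ (T z) v : ℂ) } := by
      ext z
      simp only [SetLike.mem_coe, hZmem, Set.mem_iInter, Set.mem_setOf_eq]
      constructor
      · intro h v hv; rw [h v hv, hTapp]
      · intro h v hv; rw [h v hv, hTapp]
    rw [hset]
    refine isClosed_biInter fun v hv => ?_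
    exact isClosed_eq (continuous_id.inner continuous_const)
      ((T.continuous).inner continuous_const)
  · -- decomposition
    intro x
    set v0 : Vstar := (↑U⁻¹ : Vstar →L[ℂ] Vstar) (P (x - T x)) with hv0
    refine ⟨((v0 : V), x - (v0 : V)), ⟨v0.2, ?_, by show x = (v0 : V) + (x - (v0 : V)); abel⟩, ?_⟩
    · -- z := x - v0 belongs to Z
      rw [hZorth, ← Submodule.orthogonalProjectionOnto_eq_zero_iff (K := Vstar), ← hP, hkey x v0]
      have : (U : Vstar →L[ℂ] Vstar) v0 = P (x - T x) := by
        rw [hv0, ← ContinuousLinearMap.mul_apply, U.mul_inv, ContinuousLinearMap.one_apply]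
      rw [this, sub_self]
    · -- uniqueness
      rintro ⟨v1, z1⟩ ⟨hv1, hz1, hx1⟩
      have hz1' : z1 = x - v1 := by rw [hx1]; abel
      have h1 : P (z1 - T z1) = 0 := by
        rw [hP, Submodule.orthogonalProjectionOnto_eq_zero_iff, ← hZorth]; exact hz1
      rw [hz1', hkey x ⟨v1, hv1⟩] at h1
      have h2 : (U : Vstar →L[ℂ] Vstar) (⟨v1, hv1⟩ - v0) = 0 := by
        have h3 : (U : Vstar →L[ℂ] Vstar) v0 = P (x - T x) := by
          rw [hv0, ← ContinuousLinearMap.mul_apply, U.mul_inv, ContinuousLinearMap.one_apply]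
        rw [map_sub, h3, sub_eq_zero]
        exact (sub_eq_zero.mp h1).symm
      have h4 : (⟨v1, hv1⟩ : Vstar) = v0 := by
        have := hUinj _ h2
        rwa [sub_eq_zero] at this
      have h5 : v1 = (v0 : V) := congrArg Subtype.val h4
      refine Prod.ext ?_ ?_
      · simpa using h5
      · simp only
        rw [hz1', h5]
  · -- the bound
    intro v hv z hz
    have h1 : ‖(inner ℂ v z : ℂ)‖ = ‖(inner ℂ z v : ℂ)‖ := by
      rw [← inner_conj_symm v z]
      exact RCLike.norm_conj _
    rw [h1, hz v hv]
    calc ‖d z v‖ ≤ Md * ‖z‖ * ‖v‖ := d_cs z v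
      _ = Md * ‖v‖ * ‖z‖ := by ring
end
end
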